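/- arXiv:1703.06709 — 3 statements merged into one kernel-verified Lean document; each statement's English description precedes it below -/
import Mathlib

section
/- Let N ≥ 1, M ≥ 1, and for each (k, t) ∈ ℤ × ℤ let L^{(k,t)}, R^{(k,t)}, L̃^{(k,t)} be N×N complex matrices satisfying, for all k and t, the compatibility relations L̃^{(k+1,t)} R^{(k,t+1)} = R^{(k,t)} L̃^{(k,t)} and L̃^{(k,t)} L^{(k,t+1)} = L^{(k,t)} L̃^{(k+M,t)}. Define H^{(k,t)} := L^{(k,t)} · R^{(k+M−1,t)} · R^{(k+M−2,t)} ⋯ R^{(k,t)}. Then L̃^{(k,t)} H^{(k,t+1)} = H^{(k,t)} L̃^{(k,t)} for all k, t; in particular, if L̃^{(k,t)} is invertible then H^{(k,t+1)} = (L̃^{(k,t)})^{−1} H^{(k,t)} L̃^{(k,t)}, so H^{(k,t+1)} and H^{(k,t)} are similar. -/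
/-- The compatibility (Lax) relations of the finite nonautonomous discrete hungry Toda
lattice imply `L̃^{(k,t)} H^{(k,t+1)} = H^{(k,t)} L̃^{(k,t)}` for the Hessenberg-type
matrices `H^{(k,t)} = L^{(k,t)} R^{(k+M-1,t)} ⋯ R^{(k,t)}`; in particular the `H`'s at
consecutive times are similar whenever `L̃^{(k,t)}` is invertible. -/
theorem stmt_16
    (N M : ℕ) (hM : 1 ≤ M)
    (L R Lt : ℤ → ℤ → Matrix (Fin N) (Fin N) ℂ)
    (hc1 : ∀ k t : ℤ, Lt (k + 1) t * R k (t + 1) = R k t * Lt k t)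
    (hc2 : ∀ k t : ℤ, Lt k t * L k (t + 1) = L k t * Lt (k + M) t)
    (H : ℤ → ℤ → Matrix (Fin N) (Fin N) ℂ)
    (hH : ∀ k t : ℤ, H k t = L k t *
      (((List.range M).map fun j => R (k + ((M - 1 - j : ℕ) : ℤ)) t).prod)) :
    ∀ k t : ℤ,
      Lt k t * H k (t + 1) = H k t * Lt k t ∧
      (IsUnit (Lt k t) → H k (t + 1) = (Lt k t)⁻¹ * (H k t * Lt k t)) := by
  set Q : ℕ → ℤ → ℤ → Matrix (Fin N) (Fin N) ℂ :=
    fun m k t => (((List.range m).map fun j => R (k + ((m - 1 - j : ℕ) : ℤ)) t).prod) with hQ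
  have qsucc : ∀ (m : ℕ) (k t : ℤ), Q (m + 1) k t = Q m (k + 1) t * R k t := by
    intro m k t
    simp only [hQ, List.range_succ, List.map_append, List.prod_append, List.map_cons,
      List.map_nil, List.prod_cons, List.prod_nil, mul_one]
    congr 1
    · congr 1
      apply List.map_congr_left
      intro j hj
      have hjm : j < m := List.mem_range.mp hj
      have h : k + ((m + 1 - 1 - j : ℕ) : ℤ) = (k + 1) + ((m - 1 - j : ℕ) : ℤ) := by omega
      rw [h]
    · have h : k + ((m + 1 - 1 - m : ℕ) : ℤ) = k := by omega
      rw [h]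
  have key : ∀ (m : ℕ) (k t : ℤ),
      Lt (k + m) t * Q m k (t + 1) = Q m k t * Lt k t := by
    intro m
    induction m with
    | zero => intro k t; simp [hQ]
    | succ m ih =>
      intro k t
      rw [qsucc, qsucc, ← mul_assoc]
      have hk : (k + (m + 1 : ℕ) : ℤ) = (k + 1) + (m : ℕ) := by push_cast; ring
      rw [hk, mul_assoc (Lt ((k + 1) + (m : ℕ)) t), ← mul_assoc, ih (k + 1) t,
        mul_assoc, hc1 k t, ← mul_assoc]
  intro k t
  have main : Lt k t * H k (t + 1) = H k t * Lt k t := by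
    have hH1 : H k (t + 1) = L k (t + 1) * Q M k (t + 1) := hH k (t + 1)
    have hH0 : H k t = L k t * Q M k t := hH k t
    rw [hH1, hH0, ← mul_assoc, hc2 k t, mul_assoc, key M k t, ← mul_assoc, mul_assoc]
  refine ⟨main, fun hU => ?_⟩
  rw [← main, ← mul_assoc,
    Matrix.nonsing_inv_mul _ ((Matrix.isUnit_iff_isUnit_det _).mp hU), one_mul]
end

section
/- Let M ≥ 1, N ≥ 2, let ζ_0, …, ζ_{N−1} be real with 0 < ζ_0 < … < ζ_{N−1}, set z_r := ζ_r^M, let w_r^{(m)} > 0 (0 ≤ r ≤ N−1, m ∈ ℤ) satisfy w_r^{(m+M)} = w_r^{(m)}, suppose every determinant V^{(k)}_{r_0,…,r_{n−1}} := det( w_{r_l}^{(k+i)} ζ_{r_l}^i )_{i,l=0}^{n-1} is positive for all k ∈ ℤ and all strictly increasing tuples, and let a ≤ s^{(t)} ≤ b for all t ≥ 0 with b < z_0. Define μ^{(t)}_m := Σ_r w_r^{(m)} ζ_r^m Π_{τ=0}^{t−1}(z_r − s^{(τ)}), τ^{(k,t)}_n := det(μ^{(t)}_{k+i+Mj})_{i,j=0}^{n-1},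 q^{(k,t)}_n := (τ^{(k,t)}_n τ^{(k+1,t)}_{n+1})/(τ^{(k,t)}_{n+1} τ^{(k+1,t)}_n) and e^{(k,t)}_n := (τ^{(k,t)}_{n+2} τ^{(k+M,t)}_n)/(τ^{(k,t)}_{n+1} τ^{(k+M,t)}_{n+1}). Then, as t → ∞: (i) q^{(k,t)}_n → (V^{(k)}_{N−n,…,N−1} · V^{(k+1)}_{N−n−1,…,N−1}) / (V^{(k)}_{N−n−1,…,N−1} · V^{(k+1)}_{N−n,…,N−1}) · ζ_{N−n−1} for 0 ≤ n ≤ N−1; (ii) Π_{j=0}^{M−1} q^{(k+j,t)}_n → z_{N−n−1}; and (iii) e^{(k,t)}_n → 0 for 0 ≤ n ≤ N−2. -/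
open Filter Finset Matrix

section helpers

variable {a b : ℝ} {s : ℕ → ℝ}

lemma hd_prod_pos (hsb : ∀ t, s t ≤ b) {x : ℝ} (hbx : b < x) (t : ℕ) :
    0 < ∏ τ' ∈ range t, (x - s τ') :=
  prod_pos fun τ' _ => by have := hsb τ'; linarith

lemma hd_prod_le (hsb : ∀ t, s t ≤ b) {x y : ℝ} (hbx : b < x) (hxy : x ≤ y) (t : ℕ) :
    (∏ τ' ∈ range t, (x - s τ')) ≤ ∏ τ' ∈ range t, (y - s τ') := by
  refine prod_le_prod (fun τ' _ => ?_) (fun τ' _ => ?_)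
  · have := hsb τ'; linarith
  · linarith

lemma hd_prod_ratio_le (hsa : ∀ t, a ≤ s t) (hsb : ∀ t, s t ≤ b)
    {x y : ℝ} (hbx : b < x) (hxy : x < y) (t : ℕ) :
    (∏ τ' ∈ range t, (x - s τ')) ≤ ((x - a) / (y - a)) ^ t * ∏ τ' ∈ range t, (y - s τ') := by
  have hab : a ≤ b := le_trans (hsa 0) (hsb 0)
  have hya : 0 < y - a := by linarith
  have key : ∀ τ' : ℕ, x - s τ' ≤ (x - a) / (y - a) * (y - s τ') := by
    intro τ'
    rw [div_mul_eq_mul_div, le_div_iff₀ hya]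
    nlinarith [hsa τ', hsb τ']
  calc (∏ τ' ∈ range t, (x - s τ'))
      ≤ ∏ τ' ∈ range t, ((x - a) / (y - a) * (y - s τ')) := by
        refine prod_le_prod (fun τ' _ => ?_) (fun τ' _ => key τ')
        have := hsb τ'; linarith
    _ = ((x - a) / (y - a)) ^ t * ∏ τ' ∈ range t, (y - s τ') := by
        rw [prod_mul_distrib, prod_const, card_range]

lemma hd_ratio_nonneg_lt_one (hsa : ∀ t, a ≤ s t) (hsb : ∀ t, s t ≤ b)
    {x y : ℝ} (hbx : b < x) (hxy : x < y) :
    0 ≤ (x - a) / (y - a) ∧ (x - a) / (y - a) < 1 := by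
  have hab : a ≤ b := le_trans (hsa 0) (hsb 0)
  constructor
  · apply div_nonneg <;> linarith
  · rw [div_lt_one (by linarith)]; linarith

lemma hd_ratio_tendsto_zero (hsa : ∀ t, a ≤ s t) (hsb : ∀ t, s t ≤ b)
    {x y : ℝ} (hbx : b < x) (hxy : x < y) :
    Tendsto (fun t => (∏ τ' ∈ range t, (x - s τ')) / ∏ τ' ∈ range t, (y - s τ'))
      atTop (nhds 0) := by
  obtain ⟨h0, h1⟩ := hd_ratio_nonneg_lt_one hsa hsb hbx hxy
  refine squeeze_zero (fun t => ?_) (fun t => ?_)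
    (tendsto_pow_atTop_nhds_zero_of_lt_one h0 h1)
  · exact div_nonneg (hd_prod_pos hsb hbx t).le (hd_prod_pos hsb (lt_trans hbx hxy) t).le
  · rw [div_le_iff₀ (hd_prod_pos hsb (lt_trans hbx hxy) t)]
    exact hd_prod_ratio_le hsa hsb hbx hxy t

lemma strictMono_fin_le {n N : ℕ} {f : Fin n → Fin N} (hf : StrictMono f) (j : Fin n) :
    (f j : ℕ) ≤ N - n + j := by
  have key : ∀ d : ℕ, ∀ (j : Fin n) (h : (j : ℕ) + d < n), (f j : ℕ) + d ≤ f ⟨(j : ℕ) + d, h⟩ := by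
    intro d
    induction d with
    | zero =>
      intro j h
      have e : (⟨(j : ℕ) + 0, h⟩ : Fin n) = j := by ext; simp
      rw [e]; omega
    | succ d ih =>
      intro j h
      have h' : (j : ℕ) + d < n := by omega
      have h1 := ih j h'
      have h2 : f ⟨(j : ℕ) + d, h'⟩ < f ⟨(j : ℕ) + (d + 1), h⟩ := by
        apply hf
        simp only [Fin.lt_def, Fin.val_mk]; omega
      rw [Fin.lt_def] at h2
      omega
  have h1 : (j : ℕ) + (n - 1 - (j : ℕ)) < n := by have := j.isLt; omega
  have h2 := key (n - 1 - (j : ℕ)) j h1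
  have h3 : (f ⟨(j : ℕ) + (n - 1 - (j : ℕ)), h1⟩ : ℕ) < N := (f _).isLt
  have := j.isLt
  omega

lemma det_comp_eq_zero {n m : ℕ} (A : Fin n → Fin m → ℝ) (g : Fin n → Fin m)
    (hg : ¬ Function.Injective g) :
    Matrix.det (Matrix.of fun i j : Fin n => A i (g j)) = 0 := by
  rw [Function.not_injective_iff] at hg
  obtain ⟨j1, j2, he, hne⟩ := hg
  exact Matrix.det_zero_of_column_eq hne (fun i => by simp [he])

lemma det_expand_cols {n m : ℕ} (A : Fin n → Fin m → ℝ) (c : Fin m → Fin n → ℝ) :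
    Matrix.det (Matrix.of fun i j : Fin n => ∑ r : Fin m, A i r * c r j)
      = ∑ g : Fin n → Fin m, (∏ j, c (g j) j) *
          Matrix.det (Matrix.of fun i j : Fin n => A i (g j)) := by
  rw [← Matrix.det_transpose]
  have h1 : (Matrix.of fun i j : Fin n => ∑ r : Fin m, A i r * c r j)ᵀ
      = Matrix.of (fun j : Fin n => ∑ r : Fin m, c r j • (fun i : Fin n => A i r)) := by
    ext j i
    simp only [Matrix.transpose_apply, Matrix.of_apply, Finset.sum_apply, Pi.smul_apply,
      smul_eq_mul]
    exact Finset.sum_congr rfl fun r _ => mul_comm _ _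
  rw [h1]
  have h2 : ∀ B : Matrix (Fin n) (Fin n) ℝ, B.det = Matrix.detRowAlternating B := fun _ => rfl
  rw [h2]
  have h3 := (Matrix.detRowAlternating (R := ℝ) (n := Fin n)).toMultilinearMap.map_sum
    (g := fun (j : Fin n) (r : Fin m) => c r j • (fun i : Fin n => A i r))
  simp only [AlternatingMap.coe_multilinearMap] at h3
  rw [show (Matrix.of (fun j : Fin n => ∑ r : Fin m, c r j • (fun i : Fin n => A i r)))
      = (fun j : Fin n => ∑ r : Fin m, c r j • (fun i : Fin n => A i r)) from rfl]
  rw [h3]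
  refine Finset.sum_congr rfl fun g _ => ?_
  have h4 := (Matrix.detRowAlternating (R := ℝ) (n := Fin n)).toMultilinearMap.map_smul_univ
    (fun j => c (g j) j) (fun j => fun i : Fin n => A i (g j))
  simp only [AlternatingMap.coe_multilinearMap] at h4
  rw [h4, smul_eq_mul]
  congr 1
  rw [← Matrix.det_transpose]
  rfl

end helpers

lemma tau_div_tendsto
    (M N n : ℕ) (hM : 1 ≤ M)
    (ζ : Fin N → ℝ) (hζpos : ∀ r, 0 < ζ r) (hζmono : StrictMono ζ)
    (w : Fin N → ℤ → ℝ)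
    (hwper : ∀ (r : Fin N) (m : ℤ), w r (m + M) = w r m)
    (a b : ℝ) (s : ℕ → ℝ) (hsa : ∀ t, a ≤ s t) (hsb : ∀ t, s t ≤ b)
    (hbz : ∀ r, b < ζ r ^ M)
    (μ : ℕ → ℕ → ℝ)
    (hμ : ∀ t m : ℕ, μ t m = ∑ r : Fin N, w r (m : ℤ) * ζ r ^ m *
      ∏ τ' ∈ Finset.range t, (ζ r ^ M - s τ'))
    (τ : ℕ → ℕ → ℕ → ℝ)
    (hτ : ∀ k t n : ℕ, τ k t n = Matrix.det (Matrix.of fun i j : Fin n => μ t (k + i + M * j)))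
    (k : ℕ) (tp : Fin n → Fin N) (htp : ∀ j, (tp j : ℕ) = N - n + (j : ℕ)) (hn : n ≤ N) :
    Filter.Tendsto
      (fun t => τ k t n / ∏ j : Fin n, ∏ τ' ∈ Finset.range t, (ζ (tp j) ^ M - s τ'))
      Filter.atTop
      (nhds ((∏ l : Fin n, ζ (tp l) ^ k) *
        Matrix.det (Matrix.of fun i l : Fin n =>
          w (tp l) ((k : ℤ) + (i : ℕ)) * ζ (tp l) ^ (i : ℕ)) *
        Matrix.det (Matrix.vandermonde fun l : Fin n => ζ (tp l) ^ M))) := by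
  classical
  set P : ℕ → Fin N → ℝ := fun t r => ∏ τ' ∈ Finset.range t, (ζ r ^ M - s τ') with hPdef
  set A : Fin n → Fin N → ℝ := fun i r => w r ((k : ℤ) + (i : ℕ)) * ζ r ^ (k + (i : ℕ))
    with hAdef
  set K : (Fin n → Fin N) → ℝ := fun g => (∏ j : Fin n, (ζ (g j) ^ M) ^ (j : ℕ)) *
    Matrix.det (Matrix.of fun i j : Fin n => A i (g j)) with hKdef
  set L : (Fin n → Fin N) → ℝ := fun g =>
    if Finset.image g Finset.univ = Finset.image tp Finset.univ then K g else 0 with hLdef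
  have hPpos : ∀ t r, 0 < P t r := fun t r => hd_prod_pos hsb (hbz r) t
  have hQpos : ∀ t, 0 < ∏ j : Fin n, P t (tp j) := fun t => prod_pos fun j _ => hPpos t _
  have htpmono : StrictMono tp := by
    intro x y hxy
    rw [Fin.lt_def] at hxy ⊢
    rw [htp x, htp y]
    omega
  have htpinj : Function.Injective tp := htpmono.injective
  -- periodicity
  have hwper' : ∀ (r : Fin N) (m : ℤ) (j : ℕ), w r (m + M * j) = w r m := by
    intro r m j
    induction j with
    | zero => simp
    | succ j ih =>
      have e : m + (M : ℤ) * ((j : ℕ) + 1 : ℕ) = (m + (M : ℤ) * (j : ℕ)) + M := by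
        push_cast; ring
      rw [e, hwper, ih]
  -- expansion of τ
  have htau : ∀ t, τ k t n = ∑ g : Fin n → Fin N,
      (∏ j : Fin n, P t (g j)) * K g := by
    intro t
    rw [hτ]
    have hM' : (Matrix.of fun i j : Fin n => μ t (k + i + M * j))
        = Matrix.of fun i j : Fin n =>
            ∑ r : Fin N, A i r * ((ζ r ^ M) ^ (j : ℕ) * P t r) := by
      ext i j
      simp only [Matrix.of_apply]
      rw [hμ]
      refine Finset.sum_congr rfl fun r _ => ?_
      have e1 : ((k + (i : ℕ) + M * (j : ℕ) : ℕ) : ℤ)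
          = ((k : ℤ) + (i : ℕ)) + (M : ℤ) * (j : ℕ) := by push_cast; ring
      have e2 : ζ r ^ (k + (i : ℕ) + M * (j : ℕ)) = ζ r ^ (k + (i : ℕ)) * (ζ r ^ M) ^ (j : ℕ) := by
        rw [pow_add, pow_mul]
      rw [e1, hwper' r _ (j : ℕ), e2, hAdef, hPdef]
      ring
    rw [hM', det_expand_cols]
    refine Finset.sum_congr rfl fun g _ => ?_
    rw [hKdef]
    simp only []
    rw [Finset.prod_mul_distrib]
    ring
  -- pointwise limits
  have hlim : ∀ g : Fin n → Fin N,
      Tendsto (fun t => K g * ((∏ j : Fin n, P t (g j)) / ∏ j : Fin n, P t (tp j)))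
        atTop (nhds (L g)) := by
    intro g
    by_cases hginj : Function.Injective g
    · set σ := Tuple.sort g with hσdef
      have hmono : Monotone (g ∘ σ) := Tuple.monotone_sort g
      have hsm : StrictMono (g ∘ σ) := hmono.strictMono_of_injective (hginj.comp σ.injective)
      have hle : ∀ j : Fin n, ((g ∘ σ) j : ℕ) ≤ N - n + (j : ℕ) := fun j => strictMono_fin_le hsm j
      have hprod : ∀ t, ∏ j : Fin n, P t (g j) = ∏ j : Fin n, P t ((g ∘ σ) j) :=
        fun t => (Equiv.prod_comp σ fun j => P t (g j)).symm
      by_cases him : Finset.image g Finset.univ = Finset.image tp Finset.univ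
      · -- ratio is 1
        have heq : ∀ t, ∏ j : Fin n, P t (g j) = ∏ j : Fin n, P t (tp j) := by
          intro t
          rw [show (∏ j : Fin n, P t (g j)) = ∏ x ∈ Finset.image g Finset.univ, P t x from
            (Finset.prod_image fun x _ y _ h => hginj h).symm]
          rw [him]
          exact Finset.prod_image fun x _ y _ h => htpinj h
        have : (fun t => K g * ((∏ j : Fin n, P t (g j)) / ∏ j : Fin n, P t (tp j)))
            = fun _ => K g := by
          funext t
          rw [heq t, div_self (hQpos t).ne']
          ring
        rw [this, hLdef]
        simp only [him, if_true]
        exact tendsto_const_nhds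
      · -- the ratio tends to 0
        have hL0 : L g = 0 := by rw [hLdef]; simp only [him, if_false]
        rw [hL0]
        have hne : g ∘ σ ≠ tp := by
          intro hcontra
          apply him
          have himg : Finset.image (g ∘ ⇑σ) Finset.univ = Finset.image g Finset.univ := by
            rw [show Finset.image (g ∘ ⇑σ) Finset.univ
                = Finset.image g (Finset.image (⇑σ) Finset.univ) from
              (Finset.image_image (g := g) (f := ⇑σ) (s := Finset.univ)).symm]
            congr 1
            ext x
            simp only [Finset.mem_image, Finset.mem_univ, true_iff, iff_true]
            exact ⟨σ.symm x, by simp⟩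
          rw [← himg, hcontra]
        obtain ⟨j0, hj0⟩ : ∃ j0, (g ∘ σ) j0 ≠ tp j0 := by
          by_contra hcon
          push_neg at hcon
          exact hne (funext hcon)
        have hj0lt : ((g ∘ σ) j0 : ℕ) < (tp j0 : ℕ) := by
          rw [htp j0]
          refine lt_of_le_of_ne (hle j0) fun hcontra => hj0 (Fin.ext ?_)
          rw [hcontra, htp j0]
        have hζlt : ζ ((g ∘ σ) j0) ^ M < ζ (tp j0) ^ M := by
          have h1 : ζ ((g ∘ σ) j0) < ζ (tp j0) := hζmono (by rwa [Fin.lt_def])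
          exact pow_lt_pow_left₀ h1 (hζpos _).le (by omega)
        set ρ : ℝ := (ζ ((g ∘ σ) j0) ^ M - a) / (ζ (tp j0) ^ M - a) with hρdef
        obtain ⟨hρ0, hρ1⟩ := hd_ratio_nonneg_lt_one hsa hsb (hbz _) hζlt
        have hzle : ∀ j : Fin n, ζ ((g ∘ σ) j) ^ M ≤ ζ (tp j) ^ M := by
          intro j
          have h1 : (g ∘ σ) j ≤ tp j := by
            rw [Fin.le_def, htp j]; exact hle j
          rcases eq_or_lt_of_le h1 with h | h
          · rw [h]
          · exact (pow_lt_pow_left₀ (hζmono h) (hζpos _).le (by omega)).le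
        have hbound : ∀ t, (∏ j : Fin n, P t (g j)) ≤ ρ ^ t * ∏ j : Fin n, P t (tp j) := by
          intro t
          rw [hprod t]
          have step : (∏ j : Fin n, P t ((g ∘ σ) j))
              ≤ ∏ j : Fin n, (if j = j0 then ρ ^ t * P t (tp j) else P t (tp j)) := by
            refine prod_le_prod (fun j _ => (hPpos t _).le) (fun j _ => ?_)
            by_cases hj : j = j0
            · subst hj
              simp only [if_true]
              exact hd_prod_ratio_le hsa hsb (hbz _) hζlt t
            · simp only [hj, if_false]
              exact hd_prod_le hsb (hbz _) (hzle j) t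
          refine le_trans step (le_of_eq ?_)
          rw [← Finset.mul_prod_erase Finset.univ _ (Finset.mem_univ j0)]
          rw [← Finset.mul_prod_erase Finset.univ (fun j => P t (tp j)) (Finset.mem_univ j0)]
          simp only [if_true]
          rw [mul_assoc]
          congr 1
          congr 1
          refine Finset.prod_congr rfl fun j hj => ?_
          rw [if_neg (Finset.mem_erase.mp hj).1]
        have hratio : Tendsto (fun t => (∏ j : Fin n, P t (g j)) / ∏ j : Fin n, P t (tp j))
            atTop (nhds 0) := by
          refine squeeze_zero (fun t => div_nonneg (prod_nonneg fun j _ => (hPpos t _).le)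
            (hQpos t).le) (fun t => ?_) (tendsto_pow_atTop_nhds_zero_of_lt_one hρ0 hρ1)
          rw [div_le_iff₀ (hQpos t)]
          exact hbound t
        have := hratio.const_mul (K g)
        simpa using this
    · -- non injective: everything is 0
      have hK0 : K g = 0 := by
        rw [hKdef]
        simp only []
        rw [det_comp_eq_zero A g hginj, mul_zero]
      have hL0 : L g = 0 := by
        rw [hLdef]
        by_cases him : Finset.image g Finset.univ = Finset.image tp Finset.univ
        · simp only [him, if_true]; exact hK0
        · simp only [him, if_false]
      rw [hL0]
      have : (fun t => K g * ((∏ j : Fin n, P t (g j)) / ∏ j : Fin n, P t (tp j)))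
          = fun _ => (0 : ℝ) := by
        funext t; rw [hK0, zero_mul]
      rw [this]
      exact tendsto_const_nhds
  -- assemble: tendsto of the sum
  have hsum : Tendsto (fun t => τ k t n / ∏ j : Fin n, P t (tp j)) atTop
      (nhds (∑ g : Fin n → Fin N, L g)) := by
    have hfun : (fun t => τ k t n / ∏ j : Fin n, P t (tp j))
        = fun t => ∑ g : Fin n → Fin N,
            K g * ((∏ j : Fin n, P t (g j)) / ∏ j : Fin n, P t (tp j)) := by
      funext t
      rw [htau t, Finset.sum_div]
      refine Finset.sum_congr rfl fun g _ => ?_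
      rw [mul_div_assoc]
      ring
    rw [hfun]
    exact tendsto_finset_sum _ fun g _ => hlim g
  -- compute the sum of limits
  have hsumval : (∑ g : Fin n → Fin N, L g)
      = (∏ l : Fin n, ζ (tp l) ^ k) *
        Matrix.det (Matrix.of fun i l : Fin n =>
          w (tp l) ((k : ℤ) + (i : ℕ)) * ζ (tp l) ^ (i : ℕ)) *
        Matrix.det (Matrix.vandermonde fun l : Fin n => ζ (tp l) ^ M) := by
    -- restrict to the image of composition with tp
    have step1 : (∑ g : Fin n → Fin N, L g)
        = ∑ g ∈ Finset.image (fun f : Fin n → Fin n => tp ∘ f) Finset.univ, L g := by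
      refine (Finset.sum_subset (Finset.subset_univ _) fun g _ hg => ?_).symm
      rw [hLdef]
      simp only []
      rw [if_neg]
      intro him
      apply hg
      have hex : ∀ j : Fin n, ∃ l : Fin n, tp l = g j := by
        intro j
        have h1 : g j ∈ Finset.image g Finset.univ :=
          Finset.mem_image.mpr ⟨j, Finset.mem_univ _, rfl⟩
        rw [him] at h1
        obtain ⟨l, _, hl⟩ := Finset.mem_image.mp h1
        exact ⟨l, hl⟩
      choose f hf using hex
      exact Finset.mem_image.mpr ⟨f, Finset.mem_univ _, funext hf⟩
    have hφinj : ∀ x ∈ (Finset.univ : Finset (Fin n → Fin n)),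
        ∀ y ∈ Finset.univ, tp ∘ x = tp ∘ y → x = y := by
      intro x _ y _ hxy
      funext j
      exact htpinj (congrFun hxy j)
    have step2 : (∑ g ∈ Finset.image (fun f : Fin n → Fin n => tp ∘ f) Finset.univ, L g)
        = ∑ f : Fin n → Fin n, L (tp ∘ f) := Finset.sum_image hφinj
    have step3 : ∀ f : Fin n → Fin n, L (tp ∘ f) = K (tp ∘ f) := by
      intro f
      rw [hLdef]
      simp only []
      by_cases him : Finset.image (tp ∘ f) Finset.univ = Finset.image tp Finset.univ
      · rw [if_pos him]
      · rw [if_neg him]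
        have hfninj : ¬ Function.Injective f := by
          intro hfinj
          apply him
          have hfsurj : Function.Surjective f := Finite.surjective_of_injective hfinj
          rw [show Finset.image (tp ∘ f) Finset.univ
              = Finset.image tp (Finset.image f Finset.univ) from
            (Finset.image_image (g := tp) (f := f) (s := Finset.univ)).symm]
          congr 1
          ext x
          simp only [Finset.mem_image, Finset.mem_univ, true_iff, iff_true]
          obtain ⟨y, hy⟩ := hfsurj x
          exact ⟨y, trivial, hy⟩
        have : ¬ Function.Injective (tp ∘ f) := fun hcomp =>
          hfninj (fun x y hxy => hcomp (by simp [Function.comp, hxy]))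
        rw [hKdef]
        simp only []
        rw [det_comp_eq_zero A (tp ∘ f) this, mul_zero]
    rw [step1, step2]
    rw [Finset.sum_congr rfl fun f _ => step3 f]
    -- now apply the expansion in reverse for the n × n case
    have expand := det_expand_cols (fun i l : Fin n => A i (tp l))
      (fun l j : Fin n => (ζ (tp l) ^ M) ^ (j : ℕ))
    have : (∑ f : Fin n → Fin n, K (tp ∘ f))
        = ∑ g : Fin n → Fin n, (∏ j : Fin n, (ζ (tp (g j)) ^ M) ^ (j : ℕ)) *
            Matrix.det (Matrix.of fun i j : Fin n => A i (tp (g j))) := by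
      refine Finset.sum_congr rfl fun f _ => ?_
      rw [hKdef]
      simp [Function.comp]
    rw [this, ← expand]
    have hmul : (Matrix.of fun i j : Fin n => ∑ l : Fin n, A i (tp l) * (ζ (tp l) ^ M) ^ (j : ℕ))
        = (Matrix.of fun i l : Fin n => A i (tp l)) *
          (Matrix.of fun l j : Fin n => (ζ (tp l) ^ M) ^ (j : ℕ)) := by
      ext i j
      rw [Matrix.mul_apply]
      rfl
    rw [hmul, Matrix.det_mul]
    have hvdm : (Matrix.of fun l j : Fin n => (ζ (tp l) ^ M) ^ (j : ℕ))
        = Matrix.vandermonde (fun l : Fin n => ζ (tp l) ^ M) := rfl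
    have hXdet : (Matrix.of fun i l : Fin n => A i (tp l)).det
        = (∏ l : Fin n, ζ (tp l) ^ k) *
          (Matrix.of fun i l : Fin n =>
            w (tp l) ((k : ℤ) + (i : ℕ)) * ζ (tp l) ^ (i : ℕ)).det := by
      rw [← Matrix.det_mul_row (fun l : Fin n => ζ (tp l) ^ k)
        (Matrix.of fun i l : Fin n => w (tp l) ((k : ℤ) + (i : ℕ)) * ζ (tp l) ^ (i : ℕ))]
      congr 1
      ext i l
      simp only [Matrix.of_apply, hAdef]
      rw [pow_add]
      ring
    rw [hXdet, hvdm]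
  rw [← hsumval]
  exact hsum

lemma div_four (A B C D p q : ℝ) (hp : p ≠ 0) (hq : q ≠ 0) :
    A * B / (C * D) = (A / p) * (B / q) / ((C / q) * (D / p)) := by
  rcases eq_or_ne C 0 with h | h
  · simp [h]
  rcases eq_or_ne D 0 with h' | h'
  · simp [h']
  field_simp

lemma div_six (A B C D p q r : ℝ) (hp : p ≠ 0) (hq : q ≠ 0) (hr : r ≠ 0) :
    A * B / (C * D) = ((A / p) * (B / q) / ((C / r) * (D / r))) * (p * q / r ^ 2) := by
  rcases eq_or_ne C 0 with h | h
  · simp [h]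
  rcases eq_or_ne D 0 with h' | h'
  · simp [h']
  field_simp

set_option maxHeartbeats 1000000 in
/-- Asymptotic behaviour, as `t → ∞`, of the variables `q^{(k,t)}_n` and `e^{(k,t)}_n` of the
nonautonomous discrete hungry Toda lattice built from the particular tau-function solution:
(i) `q^{(k,t)}_n` converges to a ratio of generalized Vandermonde determinants times
`ζ_{N-n-1}`; (ii) the product over an `M`-window of `q`'s converges to `z_{N-n-1} = ζ_{N-n-1}^M`;
(iii) `e^{(k,t)}_n → 0`. -/
theorem stmt_17
    (M N : ℕ) (hM : 1 ≤ M) (hN : 2 ≤ N)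
    (ζ : Fin N → ℝ) (hζpos : ∀ r, 0 < ζ r) (hζmono : StrictMono ζ)
    (w : Fin N → ℤ → ℝ) (hwpos : ∀ r m, 0 < w r m)
    (hwper : ∀ (r : Fin N) (m : ℤ), w r (m + M) = w r m)
    (V : ℤ → (n : ℕ) → (Fin n → Fin N) → ℝ)
    (hV : ∀ (k : ℤ) (n : ℕ) (r : Fin n → Fin N),
      V k n r = Matrix.det (Matrix.of fun i l : Fin n =>
        w (r l) (k + (i : ℕ)) * ζ (r l) ^ (i : ℕ)))
    (hVpos : ∀ (k : ℤ) (n : ℕ) (r : Fin n → Fin N), StrictMono r → 0 < V k n r)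
    (a b : ℝ) (hb : b < ζ ⟨0, by omega⟩ ^ M)
    (s : ℕ → ℝ) (hsa : ∀ t, a ≤ s t) (hsb : ∀ t, s t ≤ b)
    (μ : ℕ → ℕ → ℝ)
    (hμ : ∀ t m : ℕ, μ t m = ∑ r : Fin N, w r (m : ℤ) * ζ r ^ m *
      ∏ τ' ∈ Finset.range t, (ζ r ^ M - s τ'))
    (τ : ℕ → ℕ → ℕ → ℝ)
    (hτ : ∀ k t n : ℕ,
      τ k t n = Matrix.det (Matrix.of fun i j : Fin n => μ t (k + i + M * j)))
    (q e : ℕ → ℕ → ℕ → ℝ)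
    (hq : ∀ k t n : ℕ,
      q k t n = τ k t n * τ (k + 1) t (n + 1) / (τ k t (n + 1) * τ (k + 1) t n))
    (he : ∀ k t n : ℕ,
      e k t n = τ k t (n + 2) * τ (k + M) t n / (τ k t (n + 1) * τ (k + M) t (n + 1))) :
    (∀ (k n : ℕ) (hn : n < N),
      Filter.Tendsto (fun t => q k t n) Filter.atTop
        (nhds (V (k : ℤ) n (fun j => ⟨N - n + (j : ℕ), by omega⟩) *
            V ((k : ℤ) + 1) (n + 1) (fun j => ⟨N - (n + 1) + (j : ℕ), by omega⟩) /
            (V (k : ℤ) (n + 1) (fun j => ⟨N - (n + 1) + (j : ℕ), by omega⟩) *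
              V ((k : ℤ) + 1) n (fun j => ⟨N - n + (j : ℕ), by omega⟩)) *
            ζ ⟨N - n - 1, by omega⟩))) ∧
    (∀ (k n : ℕ) (hn : n < N),
      Filter.Tendsto (fun t => ∏ j ∈ Finset.range M, q (k + j) t n) Filter.atTop
        (nhds (ζ ⟨N - n - 1, by omega⟩ ^ M))) ∧
    (∀ (k n : ℕ) (hn : n + 2 ≤ N),
      Filter.Tendsto (fun t => e k t n) Filter.atTop (nhds 0)) := by
  classical
  have hbz : ∀ r : Fin N, b < ζ r ^ M := by
    intro r
    have h0 : (⟨0, by omega⟩ : Fin N) ≤ r := by simp [Fin.le_def]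
    exact lt_of_lt_of_le hb
      (pow_le_pow_left₀ (hζpos _).le (hζmono.monotone h0) M)
  have htpmono : ∀ (m : ℕ) (tp : Fin m → Fin N), (∀ j, (tp j : ℕ) = N - m + (j : ℕ)) →
      StrictMono tp := by
    intro m tp htp x y hxy
    rw [Fin.lt_def, htp x, htp y]
    rw [Fin.lt_def] at hxy
    omega
  have hWpos : ∀ (m : ℕ) (tp : Fin m → Fin N), StrictMono tp →
      0 < Matrix.det (Matrix.vandermonde fun l : Fin m => ζ (tp l) ^ M) := by
    intro m tp hmono
    rw [Matrix.det_vandermonde]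
    refine Finset.prod_pos fun i _ => Finset.prod_pos fun j hj => ?_
    have hij : i < j := Finset.mem_Ioi.mp hj
    have h2 : ζ (tp i) ^ M < ζ (tp j) ^ M :=
      pow_lt_pow_left₀ (hζmono (hmono hij)) (hζpos _).le (by omega)
    linarith
  have hζprodpos : ∀ (m kk : ℕ) (tp : Fin m → Fin N), 0 < ∏ l : Fin m, ζ (tp l) ^ kk :=
    fun m kk tp => Finset.prod_pos fun l _ => pow_pos (hζpos _) _
  have main : ∀ (k n : ℕ), n ≤ N → ∀ (tp : Fin n → Fin N),
      (∀ j, (tp j : ℕ) = N - n + (j : ℕ)) →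
      Filter.Tendsto
        (fun t => τ k t n / ∏ j : Fin n, ∏ τ' ∈ Finset.range t, (ζ (tp j) ^ M - s τ'))
        Filter.atTop
        (nhds ((∏ l : Fin n, ζ (tp l) ^ k) * V (k : ℤ) n tp *
          Matrix.det (Matrix.vandermonde fun l : Fin n => ζ (tp l) ^ M))) := by
    intro k n hn tp htp
    have h := tau_div_tendsto M N n hM ζ hζpos hζmono w hwper a b s hsa hsb hbz μ hμ τ hτ
      k tp htp hn
    rwa [← hV (k : ℤ) n tp] at h
  have hQpos : ∀ (n : ℕ) (tp : Fin n → Fin N) (t : ℕ),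
      0 < ∏ j : Fin n, ∏ τ' ∈ Finset.range t, (ζ (tp j) ^ M - s τ') :=
    fun n tp t => Finset.prod_pos fun j _ => hd_prod_pos hsb (hbz _) t
  have parti : ∀ (k n : ℕ) (hn : n < N),
      Filter.Tendsto (fun t => q k t n) Filter.atTop
        (nhds (V (k : ℤ) n (fun j => ⟨N - n + (j : ℕ), by omega⟩) *
            V ((k : ℤ) + 1) (n + 1) (fun j => ⟨N - (n + 1) + (j : ℕ), by omega⟩) /
            (V (k : ℤ) (n + 1) (fun j => ⟨N - (n + 1) + (j : ℕ), by omega⟩) *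
              V ((k : ℤ) + 1) n (fun j => ⟨N - n + (j : ℕ), by omega⟩)) *
            ζ ⟨N - n - 1, by omega⟩)) := by
    intro k n hn
    set tpn : Fin n → Fin N := fun j => ⟨N - n + (j : ℕ), by omega⟩ with htpndef
    set tpn1 : Fin (n + 1) → Fin N := fun j => ⟨N - (n + 1) + (j : ℕ), by omega⟩ with htpn1def
    have htpnv : ∀ j : Fin n, (tpn j : ℕ) = N - n + (j : ℕ) := fun j => rfl
    have htpn1v : ∀ j : Fin (n + 1), (tpn1 j : ℕ) = N - (n + 1) + (j : ℕ) := fun j => rfl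
    have hmn : StrictMono tpn := htpmono n tpn htpnv
    have hmn1 : StrictMono tpn1 := htpmono (n + 1) tpn1 htpn1v
    have T1 := main k n (by omega) tpn htpnv
    have T4 := main (k + 1) n (by omega) tpn htpnv
    have T3 := main k (n + 1) (by omega) tpn1 htpn1v
    have T2 := main (k + 1) (n + 1) (by omega) tpn1 htpn1v
    have hcast : ((k + 1 : ℕ) : ℤ) = (k : ℤ) + 1 := by push_cast; ring
    rw [hcast] at T2 T4
    have hV1 : 0 < V (k : ℤ) n tpn := hVpos _ _ _ hmn
    have hV2 : 0 < V ((k : ℤ) + 1) (n + 1) tpn1 := hVpos _ _ _ hmn1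
    have hV3 : 0 < V (k : ℤ) (n + 1) tpn1 := hVpos _ _ _ hmn1
    have hV4 : 0 < V ((k : ℤ) + 1) n tpn := hVpos _ _ _ hmn
    have hW1 := hWpos n tpn hmn
    have hW2 := hWpos (n + 1) tpn1 hmn1
    have hL3pos : 0 < (∏ l : Fin (n + 1), ζ (tpn1 l) ^ k) * V (k : ℤ) (n + 1) tpn1 *
        Matrix.det (Matrix.vandermonde fun l : Fin (n + 1) => ζ (tpn1 l) ^ M) :=
      mul_pos (mul_pos (hζprodpos _ _ _) hV3) hW2
    have hL4pos : 0 < (∏ l : Fin n, ζ (tpn l) ^ (k + 1)) * V ((k : ℤ) + 1) n tpn *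
        Matrix.det (Matrix.vandermonde fun l : Fin n => ζ (tpn l) ^ M) :=
      mul_pos (mul_pos (hζprodpos _ _ _) hV4) hW1
    have hden := T3.mul T4
    have hnum := T1.mul T2
    have hT := hnum.div hden (by positivity)
    have hfun : ∀ t : ℕ,
        (τ k t n / ∏ j : Fin n, ∏ τ' ∈ Finset.range t, (ζ (tpn j) ^ M - s τ')) *
          (τ (k + 1) t (n + 1) /
            ∏ j : Fin (n + 1), ∏ τ' ∈ Finset.range t, (ζ (tpn1 j) ^ M - s τ')) /
        ((τ k t (n + 1) /
            ∏ j : Fin (n + 1), ∏ τ' ∈ Finset.range t, (ζ (tpn1 j) ^ M - s τ')) *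
          (τ (k + 1) t n / ∏ j : Fin n, ∏ τ' ∈ Finset.range t, (ζ (tpn j) ^ M - s τ')))
        = q k t n := by
      intro t
      rw [hq]
      exact (div_four _ _ _ _ _ _ (hQpos n tpn t).ne' (hQpos (n + 1) tpn1 t).ne').symm
    have hT2 := hT.congr hfun
    -- identify the limit
    have e0 : tpn1 0 = (⟨N - n - 1, by omega⟩ : Fin N) := by
      apply Fin.ext
      simp [htpn1v]
      omega
    have esucc : ∀ l : Fin n, tpn1 l.succ = tpn l := by
      intro l
      apply Fin.ext
      rw [htpn1v, htpnv, Fin.val_succ]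
      omega
    have eprod : ∀ m : ℕ, (∏ l : Fin (n + 1), ζ (tpn1 l) ^ m)
        = ζ (⟨N - n - 1, by omega⟩ : Fin N) ^ m * ∏ l : Fin n, ζ (tpn l) ^ m := by
      intro m
      rw [Fin.prod_univ_succ, e0]
      congr 1
      exact Finset.prod_congr rfl fun l _ => by rw [esucc l]
    have epow : (∏ l : Fin n, ζ (tpn l) ^ (k + 1))
        = (∏ l : Fin n, ζ (tpn l) ^ k) * ∏ l : Fin n, ζ (tpn l) := by
      rw [← Finset.prod_mul_distrib]
      exact Finset.prod_congr rfl fun l _ => pow_succ _ _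
    have hxpos : 0 < ∏ l : Fin n, ζ (tpn l) ^ k := hζprodpos _ _ _
    have hypos : 0 < ∏ l : Fin n, ζ (tpn l) := Finset.prod_pos fun l _ => hζpos _
    have hcpos : 0 < ζ (⟨N - n - 1, by omega⟩ : Fin N) := hζpos _
    have heq : (∏ l : Fin n, ζ (tpn l) ^ k) * V (k : ℤ) n tpn *
          Matrix.det (Matrix.vandermonde fun l : Fin n => ζ (tpn l) ^ M) *
        ((∏ l : Fin (n + 1), ζ (tpn1 l) ^ (k + 1)) * V ((k : ℤ) + 1) (n + 1) tpn1 *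
          Matrix.det (Matrix.vandermonde fun l : Fin (n + 1) => ζ (tpn1 l) ^ M)) /
        ((∏ l : Fin (n + 1), ζ (tpn1 l) ^ k) * V (k : ℤ) (n + 1) tpn1 *
          Matrix.det (Matrix.vandermonde fun l : Fin (n + 1) => ζ (tpn1 l) ^ M) *
        ((∏ l : Fin n, ζ (tpn l) ^ (k + 1)) * V ((k : ℤ) + 1) n tpn *
          Matrix.det (Matrix.vandermonde fun l : Fin n => ζ (tpn l) ^ M)))
        = V (k : ℤ) n tpn * V ((k : ℤ) + 1) (n + 1) tpn1 /
            (V (k : ℤ) (n + 1) tpn1 * V ((k : ℤ) + 1) n tpn) *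
            ζ (⟨N - n - 1, by omega⟩ : Fin N) := by
      rw [eprod (k + 1), eprod k, epow, pow_succ]
      field_simp
    rw [heq] at hT2
    exact hT2
  refine ⟨parti, ?_, ?_⟩
  · -- part (ii)
    intro k n hn
    set tpn : Fin n → Fin N := fun j => ⟨N - n + (j : ℕ), by omega⟩ with htpndef
    set tpn1 : Fin (n + 1) → Fin N := fun j => ⟨N - (n + 1) + (j : ℕ), by omega⟩ with htpn1def
    have htpnv : ∀ j : Fin n, (tpn j : ℕ) = N - n + (j : ℕ) := fun j => rfl
    have htpn1v : ∀ j : Fin (n + 1), (tpn1 j : ℕ) = N - (n + 1) + (j : ℕ) := fun j => rfl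
    have hmn : StrictMono tpn := htpmono n tpn htpnv
    have hmn1 : StrictMono tpn1 := htpmono (n + 1) tpn1 htpn1v
    have hprod := tendsto_finset_prod (Finset.range M) (fun j _ => parti (k + j) n hn)
    set F : ℕ → ℝ := fun j => V ((k : ℤ) + (j : ℕ)) n tpn / V ((k : ℤ) + (j : ℕ)) (n + 1) tpn1
      with hFdef
    have hFpos : ∀ j : ℕ, 0 < F j := fun j =>
      div_pos (hVpos _ _ _ hmn) (hVpos _ _ _ hmn1)
    have hVper : ∀ (kk : ℤ) (m' : ℕ) (tp : Fin m' → Fin N),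
        V (kk + (M : ℤ)) m' tp = V kk m' tp := by
      intro kk m' tp
      rw [hV, hV]
      congr 1
      ext i l
      simp only [Matrix.of_apply]
      rw [show kk + (M : ℤ) + ((i : ℕ) : ℤ) = kk + ((i : ℕ) : ℤ) + (M : ℤ) by ring, hwper]
    have hfac : ∀ j : ℕ,
        V ((k + j : ℕ) : ℤ) n tpn * V (((k + j : ℕ) : ℤ) + 1) (n + 1) tpn1 /
          (V ((k + j : ℕ) : ℤ) (n + 1) tpn1 * V (((k + j : ℕ) : ℤ) + 1) n tpn) *
          ζ (⟨N - n - 1, by omega⟩ : Fin N)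
        = F j / F (j + 1) * ζ (⟨N - n - 1, by omega⟩ : Fin N) := by
      intro j
      have h1 : ((k + j : ℕ) : ℤ) = (k : ℤ) + (j : ℕ) := by push_cast; ring
      have h2 : ((k + j : ℕ) : ℤ) + 1 = (k : ℤ) + ((j + 1 : ℕ) : ℤ) := by push_cast; ring
      rw [h1] at h2 ⊢
      rw [h2]
      congr 1
      rw [hFdef]
      have hA : 0 < V ((k : ℤ) + (j : ℕ)) n tpn := hVpos _ _ _ hmn
      have hB : 0 < V ((k : ℤ) + ((j + 1 : ℕ) : ℤ)) (n + 1) tpn1 := hVpos _ _ _ hmn1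
      have hC : 0 < V ((k : ℤ) + (j : ℕ)) (n + 1) tpn1 := hVpos _ _ _ hmn1
      have hD : 0 < V ((k : ℤ) + ((j + 1 : ℕ) : ℤ)) n tpn := hVpos _ _ _ hmn
      field_simp
    have htel : ∀ m : ℕ, (∏ j ∈ Finset.range m, (F j / F (j + 1))) = F 0 / F m := by
      intro m
      induction m with
      | zero => simp [div_self (hFpos 0).ne']
      | succ m ih =>
        rw [Finset.prod_range_succ, ih, div_mul_div_cancel₀ (hFpos m).ne']
    have hFM : F M = F 0 := by
      simp only [hFdef, Nat.cast_zero, add_zero]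
      rw [hVper ((k : ℤ)) n tpn, hVper ((k : ℤ)) (n + 1) tpn1]
    have heqprod : (∏ j ∈ Finset.range M,
        (V ((k + j : ℕ) : ℤ) n tpn * V (((k + j : ℕ) : ℤ) + 1) (n + 1) tpn1 /
          (V ((k + j : ℕ) : ℤ) (n + 1) tpn1 * V (((k + j : ℕ) : ℤ) + 1) n tpn) *
          ζ (⟨N - n - 1, by omega⟩ : Fin N)))
        = ζ (⟨N - n - 1, by omega⟩ : Fin N) ^ M := by
      rw [Finset.prod_congr rfl fun j _ => hfac j]
      rw [Finset.prod_mul_distrib, Finset.prod_const, Finset.card_range, htel M, hFM,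
        div_self (hFpos 0).ne', one_mul]
    rw [heqprod] at hprod
    exact hprod
  · -- part (iii)
    intro k n hn2
    set tpn : Fin n → Fin N := fun j => ⟨N - n + (j : ℕ), by omega⟩ with htpndef
    set tpn1 : Fin (n + 1) → Fin N := fun j => ⟨N - (n + 1) + (j : ℕ), by omega⟩ with htpn1def
    set tpn2 : Fin (n + 2) → Fin N := fun j => ⟨N - (n + 2) + (j : ℕ), by omega⟩ with htpn2def
    have htpnv : ∀ j : Fin n, (tpn j : ℕ) = N - n + (j : ℕ) := fun j => rfl
    have htpn1v : ∀ j : Fin (n + 1), (tpn1 j : ℕ) = N - (n + 1) + (j : ℕ) := fun j => rfl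
    have htpn2v : ∀ j : Fin (n + 2), (tpn2 j : ℕ) = N - (n + 2) + (j : ℕ) := fun j => rfl
    have hmn : StrictMono tpn := htpmono n tpn htpnv
    have hmn1 : StrictMono tpn1 := htpmono (n + 1) tpn1 htpn1v
    have hmn2 : StrictMono tpn2 := htpmono (n + 2) tpn2 htpn2v
    have Ta := main k (n + 2) (by omega) tpn2 htpn2v
    have Tb := main (k + M) n (by omega) tpn htpnv
    have Tc := main k (n + 1) (by omega) tpn1 htpn1v
    have Td := main (k + M) (n + 1) (by omega) tpn1 htpn1v
    have hVc : 0 < V (k : ℤ) (n + 1) tpn1 := hVpos _ _ _ hmn1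
    have hVd : 0 < V ((k + M : ℕ) : ℤ) (n + 1) tpn1 := hVpos _ _ _ hmn1
    have hWc := hWpos (n + 1) tpn1 hmn1
    have hζc := hζprodpos (n + 1) k tpn1
    have hζd := hζprodpos (n + 1) (k + M) tpn1
    have hfirst := (Ta.mul Tb).div (Tc.mul Td) (by positivity)
    have hr21 : (⟨N - n - 2, by omega⟩ : Fin N) < (⟨N - n - 1, by omega⟩ : Fin N) := by
      rw [Fin.lt_def]; simp; omega
    have hx21 : ζ (⟨N - n - 2, by omega⟩ : Fin N) ^ M < ζ (⟨N - n - 1, by omega⟩ : Fin N) ^ M :=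
      pow_lt_pow_left₀ (hζmono hr21) (hζpos _).le (by omega)
    have hratio := hd_ratio_tendsto_zero hsa hsb (hbz (⟨N - n - 2, by omega⟩ : Fin N)) hx21
    have hT := hfirst.mul hratio
    rw [mul_zero] at hT
    refine hT.congr fun t => ?_
    rw [he]
    have hQ2 : (0:ℝ) < ∏ j : Fin (n + 2), ∏ τ' ∈ Finset.range t, (ζ (tpn2 j) ^ M - s τ') :=
      hQpos (n + 2) tpn2 t
    have hQ1 : (0:ℝ) < ∏ j : Fin (n + 1), ∏ τ' ∈ Finset.range t, (ζ (tpn1 j) ^ M - s τ') :=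
      hQpos (n + 1) tpn1 t
    have hQ0 : (0:ℝ) < ∏ j : Fin n, ∏ τ' ∈ Finset.range t, (ζ (tpn j) ^ M - s τ') :=
      hQpos n tpn t
    have h6 := div_six (τ k t (n + 2)) (τ (k + M) t n) (τ k t (n + 1)) (τ (k + M) t (n + 1))
      (∏ j : Fin (n + 2), ∏ τ' ∈ Finset.range t, (ζ (tpn2 j) ^ M - s τ'))
      (∏ j : Fin n, ∏ τ' ∈ Finset.range t, (ζ (tpn j) ^ M - s τ'))
      (∏ j : Fin (n + 1), ∏ τ' ∈ Finset.range t, (ζ (tpn1 j) ^ M - s τ'))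
      hQ2.ne' hQ0.ne' hQ1.ne'
    rw [h6]
    congr 1
    have hsplit2 : (∏ j : Fin (n + 2), ∏ τ' ∈ Finset.range t, (ζ (tpn2 j) ^ M - s τ'))
        = (∏ τ' ∈ Finset.range t, (ζ (⟨N - n - 2, by omega⟩ : Fin N) ^ M - s τ')) *
          ∏ j : Fin (n + 1), ∏ τ' ∈ Finset.range t, (ζ (tpn1 j) ^ M - s τ') := by
      rw [Fin.prod_univ_succ]
      congr 1
      refine Finset.prod_congr rfl fun l _ => ?_
      rw [show tpn2 l.succ = tpn1 l from Fin.ext (by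
        rw [htpn2v, htpn1v, Fin.val_succ]; omega)]
    have hsplit1 : (∏ j : Fin (n + 1), ∏ τ' ∈ Finset.range t, (ζ (tpn1 j) ^ M - s τ'))
        = (∏ τ' ∈ Finset.range t, (ζ (⟨N - n - 1, by omega⟩ : Fin N) ^ M - s τ')) *
          ∏ j : Fin n, ∏ τ' ∈ Finset.range t, (ζ (tpn j) ^ M - s τ') := by
      rw [Fin.prod_univ_succ]
      congr 1
      refine Finset.prod_congr rfl fun l _ => ?_
      rw [show tpn1 l.succ = tpn l from Fin.ext (by
        rw [htpn1v, htpnv, Fin.val_succ]; omega)]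
    have hPb : (0:ℝ) < ∏ τ' ∈ Finset.range t, (ζ (⟨N - n - 1, by omega⟩ : Fin N) ^ M - s τ') :=
      hd_prod_pos hsb (hbz _) t
    rw [hsplit2, hsplit1]
    field_simp
end

section
/- Let M ≥ 1, N ≥ 1, let Z_0 ≥ Z_1 ≥ … ≥ Z_{N−1} be reals, let W_r^{(m)} (0 ≤ r ≤ N−1, m ∈ ℤ) be reals with W_r^{(m+M)} = W_r^{(m)} satisfying W^{(m)}_{r_1} − W^{(m+1)}_{r_1} + W^{(m+1)}_{r_0} − W^{(m)}_{r_0} + (Z_{r_0} − Z_{r_1})/M ≥ 0 for all m ∈ ℤ and all 0 ≤ r_0 < r_1 ≤ N−1, and let S^{(t)} (t ≥ 0) be reals. Define T^{(k,t)}_0 := 0 and, for 1 ≤ n ≤ N, T^{(k,t)}_n := min over 0 ≤ r_0 < r_1 < … < r_{n−1} ≤ N−1 of Σ_{j=0}^{n−1} ( W_{r_j}^{(k+j)} + ((k + (M+1)j)/M)·Z_{r_j} + Σ_{τ=0}^{t−1} min(Z_{r_j}, S^{(τ)}) ). In ℝ ∪ {+∞}, with T^{(k,t)}_n := +∞ for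 n > N, define Q^{(k,t)}_n := T^{(k,t)}_n − T^{(k,t)}_{n+1} + T^{(k+1,t)}_{n+1} − T^{(k+1,t)}_n (0 ≤ n ≤ N−1), E^{(k,t)}_n := T^{(k,t)}_{n+2} − T^{(k,t)}_{n+1} + T^{(k+M,t)}_n − T^{(k+M,t)}_{n+1} (with E^{(k,t)}_{N−1} = +∞), Ẽ^{(k,t)}_n := T^{(k,t)}_{n+2} − T^{(k,t)}_{n+1} + T^{(k,t+1)}_n − T^{(k,t+1)}_{n+1} (with Ẽ^{(k,t)}_{N−1} = +∞), D^{(k,t)}_n := T^{(k,t+1)}_n − T^{(k,t)}_{n+1} + T^{(k+1,t)}_{n+1} − T^{(k+1,t+1)}_n, and F^{(k,t)}_n := T^{(k,t)}_{n+2} − T^{(k,t+1)}_{n+1} + T^{(k+M,t+1)}_n − T^{(k+M,t)}_{n+1} + S^{(t)}. Then for all k ∈ ℤ, t ≥ 0 and all n in the valid index ranges, the nonautonomous ultradiscrete hungry Toda lattice equations hold: Q^{(k,t+1)}_n = min(D^{(k,t)}_n, Ẽ^{(k,t)}_n); E^{(k,t+1)}_n = min(F^{(k,t)}_n, Ẽ^{(k+M,t)}_n);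 D^{(k,t)}_{n+1} = D^{(k,t)}_n − Q^{(k,t+1)}_n + Q^{(k,t)}_{n+1}; F^{(k,t)}_{n+1} = F^{(k,t)}_n − E^{(k,t+1)}_n + E^{(k,t)}_{n+1}; Ẽ^{(k+1,t)}_n = Ẽ^{(k,t)}_n − Q^{(k,t+1)}_n + Q^{(k,t)}_{n+1}; Ẽ^{(k,t)}_{n+1} = Ẽ^{(k+M,t)}_n − E^{(k,t+1)}_n + E^{(k,t)}_{n+1}; with boundary conditions D^{(k,t)}_0 = Q^{(k,t)}_0, F^{(k,t)}_0 = E^{(k,t)}_0 + max(0, S^{(t)} − Σ_{j=0}^{M−1} Q^{(k+j,t)}_0), and Ẽ^{(k,t)}_0 = E^{(k,t)}_0 + max(0, Σ_{j=0}^{M−1} Q^{(k+j,t)}_0 − S^{(t)}). -/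
open scoped Classical
open Finset

section Helpers

lemma sum_if_split {γ : Type*} [AddCommMonoid γ] (F G : ℕ → γ) {i n : ℕ} (hin : i ≤ n) :
    ∑ j ∈ Finset.range n, (if j < i then F j else G j)
      = ∑ j ∈ Finset.range i, F j + ∑ j ∈ Finset.Ico i n, G j := by
  rw [Finset.range_eq_Ico, ← Finset.sum_Ico_consecutive _ (Nat.zero_le i) hin,
    ← Finset.range_eq_Ico]
  congr 1
  · exact Finset.sum_congr rfl (fun j hj => if_pos (Finset.mem_range.1 hj))
  · exact Finset.sum_congr rfl (fun j hj => if_neg (not_lt.2 (Finset.mem_Ico.1 hj).1))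

end Helpers

namespace NUH

variable {N : ℕ}

noncomputable def om (M : ℕ) (Z : Fin N → ℝ) (W : Fin N → ℤ → ℝ) (S : ℕ → ℝ)
    (k : ℤ) (t : ℕ) (j : ℕ) (x : Fin N) : ℝ :=
  W x (k + (j : ℤ)) + ((k + (M + 1) * (j : ℤ) : ℤ) : ℝ) / (M : ℝ) * Z x
    + ∑ τ ∈ Finset.range t, min (Z x) (S τ)

noncomputable def hh (Z : Fin N → ℝ) (S : ℕ → ℝ) (t : ℕ) (x : Fin N) : ℝ := min (Z x) (S t)
noncomputable def ph (Z : Fin N → ℝ) (S : ℕ → ℝ) (t : ℕ) (x : Fin N) : ℝ := Z x - min (Z x) (S t)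
noncomputable def dd (Z : Fin N → ℝ) (W : Fin N → ℤ → ℝ) (M : ℕ) (m : ℤ) (x : Fin N) : ℝ :=
  W x (m + 1) - W x m + Z x / M

section Basic
variable (M : ℕ) (Z : Fin N → ℝ) (W : Fin N → ℤ → ℝ) (S : ℕ → ℝ)

lemma hh_le (t : ℕ) (x : Fin N) : hh Z S t x ≤ S t := min_le_right _ _

lemma hh_anti (hZ : ∀ r r' : Fin N, r ≤ r' → Z r' ≤ Z r) {t : ℕ} {x y : Fin N} (hxy : x ≤ y) :
    hh Z S t y ≤ hh Z S t x := min_le_min (hZ _ _ hxy) le_rfl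

lemma ph_nonneg (t : ℕ) (x : Fin N) : 0 ≤ ph Z S t x := sub_nonneg.2 (min_le_left _ _)

lemma ph_eq_max (t : ℕ) (x : Fin N) : ph Z S t x = max 0 (Z x - S t) := by
  unfold ph
  rcases le_total (Z x) (S t) with h | h
  · rw [min_eq_left h, sub_self, eq_comm, max_eq_left (by linarith)]
  · rw [min_eq_right h, eq_comm, max_eq_right (by linarith)]

lemma ph_anti (hZ : ∀ r r' : Fin N, r ≤ r' → Z r' ≤ Z r) {t : ℕ} {x y : Fin N} (hxy : x ≤ y) :
    ph Z S t y ≤ ph Z S t x := by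
  rw [ph_eq_max, ph_eq_max]
  exact max_le_max le_rfl (sub_le_sub_right (hZ _ _ hxy) _)

lemma ph_or_hh (t : ℕ) (x : Fin N) : ph Z S t x = 0 ∨ hh Z S t x = S t := by
  rcases min_choice (Z x) (S t) with h | h
  · exact Or.inl (by unfold ph; rw [h]; ring)
  · exact Or.inr h

lemma dd_anti (hM : 1 ≤ M)
    (hWineq : ∀ (m : ℤ) (r0 r1 : Fin N), r0 < r1 →
      0 ≤ W r1 m - W r1 (m + 1) + W r0 (m + 1) - W r0 m + (Z r0 - Z r1) / M)
    {m : ℤ} {x y : Fin N} (hxy : x ≤ y) : dd Z W M m y ≤ dd Z W M m x := by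
  rcases eq_or_lt_of_le hxy with h | h
  · rw [h]
  · have h0 := hWineq m x y h
    rw [sub_div] at h0
    unfold dd; linarith

lemma dd_per (hWper : ∀ (r : Fin N) (m : ℤ), W r (m + M) = W r m) (m : ℤ) (x : Fin N) :
    dd Z W M (m + M) x = dd Z W M m x := by
  unfold dd
  rw [show m + (M:ℤ) + 1 = (m + 1) + (M:ℤ) by ring, hWper, hWper]

variable {M}

lemma omt (k : ℤ) (t j : ℕ) (x : Fin N) :
    om M Z W S k (t + 1) j x = om M Z W S k t j x + hh Z S t x := by
  unfold om hh; rw [sum_range_succ]; ring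

lemma omk1 (hM : 1 ≤ M) (k : ℤ) (t j : ℕ) (x : Fin N) :
    om M Z W S (k + 1) t j x = om M Z W S k t j x + dd Z W M (k + j) x := by
  have hM0 : (M : ℝ) ≠ 0 := by positivity
  unfold om dd
  rw [show k + 1 + (j : ℤ) = (k + (j:ℤ)) + 1 by ring]
  have : ((k + 1 + (M + 1) * (j : ℤ) : ℤ) : ℝ) = ((k + (M + 1) * (j : ℤ) : ℤ) : ℝ) + 1 := by
    push_cast; ring
  rw [this]
  field_simp
  ring

lemma omkM (hM : 1 ≤ M) (hWper : ∀ (r : Fin N) (m : ℤ), W r (m + M) = W r m)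
    (k : ℤ) (t j : ℕ) (x : Fin N) :
    om M Z W S (k + M) t j x = om M Z W S k t j x + Z x := by
  have hM0 : (M : ℝ) ≠ 0 := by positivity
  unfold om
  rw [show k + (M:ℤ) + (j : ℤ) = (k + (j:ℤ)) + (M:ℤ) by ring, hWper]
  have : ((k + M + (M + 1) * (j : ℤ) : ℤ) : ℝ) = ((k + (M + 1) * (j : ℤ) : ℤ) : ℝ) + M := by
    push_cast; ring
  rw [this]
  field_simp
  ring

lemma omj (hM : 1 ≤ M) (k : ℤ) (t j : ℕ) (x : Fin N) :
    om M Z W S k t (j + 1) x = om M Z W S (k + 1) t j x + Z x := by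
  have hM0 : (M : ℝ) ≠ 0 := by positivity
  unfold om
  rw [show k + ((j:ℕ) + 1 : ℕ) = (k + 1) + (j:ℤ) by push_cast; ring]
  have : ((k + (M + 1) * ((j:ℕ) + 1 : ℕ) : ℤ) : ℝ) = ((k + 1 + (M + 1) * (j : ℤ) : ℤ) : ℝ) + M := by
    push_cast; ring
  rw [this]
  field_simp
  ring

lemma omjM (hM : 1 ≤ M) (hWper : ∀ (r : Fin N) (m : ℤ), W r (m + M) = W r m)
    (k : ℤ) (t j : ℕ) (x : Fin N) :
    om M Z W S k t (j + 1) x = om M Z W S (k + M) t j x + dd Z W M (k + j) x := by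
  rw [omj Z W S hM, omk1 Z W S hM, omkM Z W S hM hWper]
  ring

end Basic


def SMon (ρ : ℕ → Fin N) (n : ℕ) : Prop := ∀ ⦃a b : ℕ⦄, a < b → b < n → ρ a < ρ b

noncomputable def wS (M : ℕ) (Z : Fin N → ℝ) (W : Fin N → ℤ → ℝ) (S : ℕ → ℝ)
    (k : ℤ) (t n : ℕ) (ρ : ℕ → Fin N) : ℝ :=
  ∑ j ∈ Finset.range n, om M Z W S k t j (ρ j)

abbrev FT (N n : ℕ) : Finset (Fin n → Fin N) :=
  Finset.univ.filter (fun r => StrictMono r)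

noncomputable def Tr (M : ℕ) (Z : Fin N → ℝ) (W : Fin N → ℤ → ℝ) (S : ℕ → ℝ)
    (k : ℤ) (t n : ℕ) : ℝ :=
  if h : (FT N n).Nonempty then
    (FT N n).inf' h (fun r => ∑ j : Fin n, om M Z W S k t (j : ℕ) (r j)) else 0

lemma FT_nonempty {n : ℕ} (hn : n ≤ N) : (FT N n).Nonempty :=
  ⟨Fin.castLE hn, Finset.mem_filter.2 ⟨Finset.mem_univ _, Fin.strictMono_castLE hn⟩⟩

lemma smon_le {ρ : ℕ → Fin N} {n : ℕ} (hρ : SMon ρ n) : ∀ j, j < n → j ≤ (ρ j : ℕ) := by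
  intro j
  induction j with
  | zero => intro _; exact Nat.zero_le _
  | succ i ih =>
    intro hj
    have h1 : i ≤ (ρ i : ℕ) := ih (Nat.lt_of_succ_lt hj)
    have h2 : (ρ i : ℕ) < (ρ (i+1) : ℕ) := hρ (Nat.lt_succ_self i) hj
    omega

lemma smon_card {ρ : ℕ → Fin N} {n : ℕ} (hρ : SMon ρ n) (hn : 0 < n) : n ≤ N := by
  have h1 : n - 1 ≤ (ρ (n-1) : ℕ) := smon_le hρ _ (by omega)
  have h2 : (ρ (n-1) : ℕ) < N := (ρ (n-1)).isLt
  omega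

section TrLemmas
variable (M : ℕ) (Z : Fin N → ℝ) (W : Fin N → ℤ → ℝ) (S : ℕ → ℝ)

lemma Tr_le {n : ℕ} (hn : n ≤ N) (k : ℤ) (t : ℕ) {ρ : ℕ → Fin N} (hρ : SMon ρ n) :
    Tr M Z W S k t n ≤ wS M Z W S k t n ρ := by
  rw [Tr, dif_pos (FT_nonempty hn)]
  have hmem : (fun j : Fin n => ρ j) ∈ FT N n := by
    refine Finset.mem_filter.2 ⟨Finset.mem_univ _, ?_⟩
    intro a b hab
    exact hρ hab b.isLt
  refine le_trans (Finset.inf'_le _ hmem) ?_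
  rw [wS, ← Fin.sum_univ_eq_sum_range (fun q => om M Z W S k t q (ρ q)) n]

lemma Tr_min (hN : 1 ≤ N) {n : ℕ} (hn : n ≤ N) (k : ℤ) (t : ℕ) :
    ∃ ρ : ℕ → Fin N, SMon ρ n ∧ Tr M Z W S k t n = wS M Z W S k t n ρ := by
  rw [Tr, dif_pos (FT_nonempty hn)]
  obtain ⟨r, hrmem, hval⟩ := Finset.exists_mem_eq_inf' (FT_nonempty hn)
    (fun r : Fin n → Fin N => ∑ j : Fin n, om M Z W S k t (j : ℕ) (r j))
  have hrSM : StrictMono r := (Finset.mem_filter.1 hrmem).2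
  refine ⟨fun q => if h : q < n then r ⟨q, h⟩ else ⟨0, hN⟩, ?_, ?_⟩
  · intro a b hab hbn
    simp only [dif_pos (lt_trans hab hbn), dif_pos hbn]
    exact hrSM (show (⟨a, lt_trans hab hbn⟩ : Fin n) < ⟨b, hbn⟩ from hab)
  · rw [hval, wS, ← Fin.sum_univ_eq_sum_range
      (fun q => om M Z W S k t q (if h : q < n then r ⟨q, h⟩ else ⟨0, hN⟩)) n]
    refine Finset.sum_congr rfl ?_
    intro j _
    rw [dif_pos j.isLt]

lemma Tr_zero (k : ℤ) (t : ℕ) : Tr M Z W S k t 0 = 0 := by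
  rw [Tr, dif_pos (FT_nonempty (Nat.zero_le N))]
  refine le_antisymm ?_ ?_
  · refine le_trans (Finset.inf'_le _ (Finset.mem_filter.2
      ⟨Finset.mem_univ _, Fin.strictMono_castLE (Nat.zero_le N)⟩)) ?_
    simp
  · refine Finset.le_inf' _ _ ?_
    intro b _
    simp

lemma inf_coe {α : Type*} [DecidableEq α] (s : Finset α) (h : s.Nonempty) (f : α → ℝ) :
    s.inf (fun a => ((f a : ℝ) : EReal)) = ((s.inf' h f : ℝ) : EReal) := by
  rw [← Finset.inf'_eq_inf h]
  exact (Finset.apply_inf'_eq_inf'_comp h (f := f) Real.toEReal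
    (fun x y => EReal.coe_strictMono.monotone.map_min)).symm

end TrLemmas
section Core
variable {N : ℕ} (M : ℕ) (Z : Fin N → ℝ) (W : Fin N → ℤ → ℝ) (S : ℕ → ℝ)

lemma omEF (hM : 1 ≤ M) (k : ℤ) (t j : ℕ) (x : Fin N) :
    om M Z W S k t (j + 1) x = om M Z W S (k + 1) (t + 1) j x + ph Z S t x := by
  rw [omj Z W S hM, omt, ph]
  unfold hh
  ring

lemma omAB (hM : 1 ≤ M) (k : ℤ) (t j : ℕ) (x : Fin N) :
    om M Z W S (k + 1) (t + 1) j x = om M Z W S k t j x + dd Z W M (k + j) x + hh Z S t x := by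
  rw [omt, omk1 Z W S hM]

lemma omPh (hM : 1 ≤ M) (hWper : ∀ (r : Fin N) (m : ℤ), W r (m + M) = W r m) (k : ℤ) (t j : ℕ) (x : Fin N) :
    om M Z W S (k + M) t j x = om M Z W S k (t + 1) j x + ph Z S t x := by
  rw [omkM Z W S hM hWper, omt, ph]
  unfold hh
  ring

lemma omB2sw (hM : 1 ≤ M) (hWper : ∀ (r : Fin N) (m : ℤ), W r (m + M) = W r m) (k : ℤ) (t j : ℕ) (x : Fin N) :
    om M Z W S k (t + 1) (j + 1) x
      = om M Z W S (k + M) t j x + dd Z W M (k + j) x + hh Z S t x := by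
  rw [omt, omjM Z W S hM hWper]

/-- B1 easy direction 1 : `A + B ≤ C + D`. -/
lemma B1a (hM : 1 ≤ M) (hN : 1 ≤ N) (hZ : ∀ r r' : Fin N, r ≤ r' → Z r' ≤ Z r) (hWineq : ∀ (m : ℤ) (r0 r1 : Fin N), r0 < r1 →
      0 ≤ W r1 m - W r1 (m + 1) + W r0 (m + 1) - W r0 m + (Z r0 - Z r1) / M) (k : ℤ) (t n : ℕ) (hn : n + 1 ≤ N) :
    Tr M Z W S (k+1) (t+1) (n+1) + Tr M Z W S k t (n+1)
      ≤ Tr M Z W S (k+1) t (n+1) + Tr M Z W S k (t+1) (n+1) := by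
  obtain ⟨u, hu, huv⟩ := Tr_min M Z W S hN hn (k+1) t
  obtain ⟨v, hv, hvv⟩ := Tr_min M Z W S hN hn k (t+1)
  have hA : Tr M Z W S (k+1) (t+1) (n+1) ≤ wS M Z W S (k+1) (t+1) (n+1)
      (fun j => max (u j) (v j)) := by
    refine Tr_le M Z W S hn _ _ ?_
    intro p q hpq hq
    exact max_lt_max (hu hpq hq) (hv hpq hq)
  have hB : Tr M Z W S k t (n+1) ≤ wS M Z W S k t (n+1) (fun j => min (u j) (v j)) := by
    refine Tr_le M Z W S hn _ _ ?_
    intro p q hpq hq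
    exact min_lt_min (hu hpq hq) (hv hpq hq)
  have hkey : wS M Z W S (k+1) (t+1) (n+1) (fun j => max (u j) (v j))
      + wS M Z W S k t (n+1) (fun j => min (u j) (v j))
      ≤ wS M Z W S (k+1) t (n+1) u + wS M Z W S k (t+1) (n+1) v := by
    unfold wS
    rw [← Finset.sum_add_distrib, ← Finset.sum_add_distrib]
    refine Finset.sum_le_sum ?_
    intro j _
    dsimp only
    rcases le_total (v j) (u j) with h | h
    · rw [max_eq_left h, min_eq_right h]
      have e1 := omAB M Z W S hM k t j (u j)
      have e2 := omt (M := M) Z W S k t j (v j)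
      have e3 := omk1 Z W S hM k t j (u j)
      have := hh_anti Z S hZ (t := t) h
      linarith
    · rw [max_eq_right h, min_eq_left h]
      have e1 := omAB M Z W S hM k t j (v j)
      have e2 := omt (M := M) Z W S k t j (v j)
      have e3 := omk1 Z W S hM k t j (u j)
      have e4 := omAB M Z W S hM k t j (u j)
      have := dd_anti M Z W hM hWineq (m := k + (j:ℤ)) h
      linarith
  rw [huv, hvv]
  linarith

/-- boundary min lemma -/
lemma L89 (hM : 1 ≤ M) (hN : 1 ≤ N) (hWper : ∀ (r : Fin N) (m : ℤ), W r (m + M) = W r m) (k : ℤ) (t : ℕ) :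
    Tr M Z W S k (t+1) 1 = min (Tr M Z W S k t 1 + S t) (Tr M Z W S (k+M) t 1) := by
  have h1 : (1 : ℕ) ≤ N := hN
  refine le_antisymm (le_min ?_ ?_) ?_
  · obtain ⟨ρ, hρ, hρv⟩ := Tr_min M Z W S hN h1 k t
    refine le_trans (Tr_le M Z W S h1 k (t+1) hρ) ?_
    rw [hρv]
    unfold wS
    rw [Finset.sum_range_one, Finset.sum_range_one, omt]
    have := hh_le Z S t (ρ 0)
    linarith
  · obtain ⟨ρ, hρ, hρv⟩ := Tr_min M Z W S hN h1 (k+M) t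
    refine le_trans (Tr_le M Z W S h1 k (t+1) hρ) ?_
    rw [hρv]
    unfold wS
    rw [Finset.sum_range_one, Finset.sum_range_one]
    have e1 := omPh M Z W S hM hWper k t 0 (ρ 0)
    have := ph_nonneg Z S t (ρ 0)
    linarith
  · obtain ⟨ρ, hρ, hρv⟩ := Tr_min M Z W S hN h1 k (t+1)
    rw [hρv]
    unfold wS
    rw [Finset.sum_range_one]
    rcases min_choice (Z (ρ 0)) (S t) with h | h
    · refine le_trans (min_le_right _ _) ?_
      have e1 := omPh M Z W S hM hWper k t 0 (ρ 0)
      have e2 : ph Z S t (ρ 0) = 0 := by unfold ph; rw [h]; ring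
      have := Tr_le M Z W S h1 (k+M) t hρ
      unfold wS at this
      rw [Finset.sum_range_one] at this
      linarith
    · refine le_trans (min_le_left _ _) ?_
      have e1 := omt (M := M) Z W S k t 0 (ρ 0)
      have e2 : hh Z S t (ρ 0) = S t := h
      have := Tr_le M Z W S h1 k t hρ
      unfold wS at this
      rw [Finset.sum_range_one] at this
      rw [e1, e2]
      linarith

/-- B1 easy direction 2 : `A + B ≤ E + F`. -/
lemma B1b (hM : 1 ≤ M) (hN : 1 ≤ N)
    (hZ : ∀ r r' : Fin N, r ≤ r' → Z r' ≤ Z r)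
    (k : ℤ) (t n : ℕ) (hn2 : n + 2 ≤ N) :
    Tr M Z W S (k+1) (t+1) (n+1) + Tr M Z W S k t (n+1)
      ≤ Tr M Z W S k t (n+2) + Tr M Z W S (k+1) (t+1) n := by
  obtain ⟨w, hw, hwv⟩ := Tr_min M Z W S hN hn2 k t
  obtain ⟨s, hs, hsv⟩ := Tr_min M Z W S hN (show n ≤ N by omega) (k+1) (t+1)
  have hQn : n ≤ n ∧ ∀ q, n ≤ q → q < n → w (q+2) ≤ s q :=
    ⟨le_rfl, fun q h1 h2 => absurd h2 (by omega)⟩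
  have hQex : ∃ i, i ≤ n ∧ ∀ q, i ≤ q → q < n → w (q+2) ≤ s q := ⟨n, hQn⟩
  set i := Nat.find hQex with hidef
  obtain ⟨hin, hitail⟩ := Nat.find_spec hQex
  have hjunc : 1 ≤ i → s (i-1) < w (i+1) := by
    intro hi
    have hnot := Nat.find_min hQex (show i - 1 < i by omega)
    by_contra hcon
    push_neg at hcon
    apply hnot
    refine ⟨by omega, fun q h1 h2 => ?_⟩
    rcases eq_or_lt_of_le h1 with h | h1'
    · rw [show q + 2 = i + 1 by omega]
      rw [← h]
      exact hcon
    · exact hitail q (by omega) h2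
  set a : ℕ → Fin N := fun j => if j < i then s j else w (j+1) with hadef
  set b : ℕ → Fin N := fun j => if j < i + 1 then w j else s (j-1) with hbdef
  have hSMa : SMon a (n+1) := by
    intro p q hpq hq
    rw [hadef]
    dsimp only
    by_cases hqi : q < i
    · rw [if_pos (lt_trans hpq hqi), if_pos hqi]
      exact hs hpq (by omega)
    · by_cases hpi : p < i
      · rw [if_pos hpi, if_neg hqi]
        have h1 : s p ≤ s (i-1) := by
          rcases eq_or_lt_of_le (show p ≤ i-1 by omega) with h | h
          · rw [h]
          · exact le_of_lt (hs h (by omega))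
        have h2 := hjunc (by omega)
        have h3 : w (i+1) ≤ w (q+1) := by
          rcases eq_or_lt_of_le (show i + 1 ≤ q + 1 by omega) with h | h
          · rw [h]
          · exact le_of_lt (hw h (by omega))
        exact lt_of_le_of_lt h1 (lt_of_lt_of_le h2 h3)
      · rw [if_neg hpi, if_neg hqi]
        exact hw (by omega) (by omega)
  have hSMb : SMon b (n+1) := by
    intro p q hpq hq
    rw [hbdef]
    dsimp only
    by_cases hqi : q < i + 1
    · rw [if_pos (lt_trans hpq hqi), if_pos hqi]
      exact hw hpq (by omega)
    · by_cases hpi : p < i + 1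
      · rw [if_pos hpi, if_neg hqi]
        have h1 : w p < w (q+1) := hw (by omega) (by omega)
        have h2 : w (q+1) ≤ s (q-1) := by
          rw [show q + 1 = (q-1) + 2 by omega]
          exact hitail (q-1) (by omega) (by omega)
        exact lt_of_lt_of_le h1 h2
      · rw [if_neg hpi, if_neg hqi]
        exact hs (by omega) (by omega)
  have hTa := Tr_le M Z W S (show n+1 ≤ N by omega) (k+1) (t+1) hSMa
  have hTb := Tr_le M Z W S (show n+1 ≤ N by omega) k t hSMb
  have key : wS M Z W S (k+1) (t+1) (n+1) a + wS M Z W S k t (n+1) b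
      ≤ wS M Z W S k t (n+2) w + wS M Z W S (k+1) (t+1) n s := by
    have e1 : wS M Z W S (k+1) (t+1) (n+1) a
        = ∑ j ∈ Finset.range i, om M Z W S (k+1) (t+1) j (s j)
          + ∑ j ∈ Finset.Ico i (n+1), om M Z W S (k+1) (t+1) j (w (j+1)) := by
      rw [wS, ← sum_if_split _ _ (show i ≤ n+1 by omega)]
      refine Finset.sum_congr rfl (fun j _ => ?_)
      rw [hadef]
      exact apply_ite _ _ _ _
    have e2 : wS M Z W S k t (n+1) b
        = ∑ j ∈ Finset.range (i+1), om M Z W S k t j (w j)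
          + ∑ j ∈ Finset.Ico (i+1) (n+1), om M Z W S k t j (s (j-1)) := by
      rw [wS, ← sum_if_split _ _ (show i+1 ≤ n+1 by omega)]
      refine Finset.sum_congr rfl (fun j _ => ?_)
      rw [hbdef]
      exact apply_ite _ _ _ _
    have e3 : wS M Z W S k t (n+2) w
        = ∑ j ∈ Finset.range (i+1), om M Z W S k t j (w j)
          + ∑ j ∈ Finset.Ico (i+1) (n+2), om M Z W S k t j (w j) := by
      rw [wS, Finset.range_eq_Ico,
        ← Finset.sum_Ico_consecutive _ (Nat.zero_le (i+1)) (show i+1 ≤ n+2 by omega),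
        ← Finset.range_eq_Ico]
    have e4 : wS M Z W S (k+1) (t+1) n s
        = ∑ j ∈ Finset.range i, om M Z W S (k+1) (t+1) j (s j)
          + ∑ j ∈ Finset.Ico i n, om M Z W S (k+1) (t+1) j (s j) := by
      rw [wS, Finset.range_eq_Ico,
        ← Finset.sum_Ico_consecutive _ (Nat.zero_le i) (show i ≤ n by omega),
        ← Finset.range_eq_Ico]
    rw [e1, e2, e3, e4]
    have t1 : ∑ j ∈ Finset.Ico i (n+1), om M Z W S (k+1) (t+1) j (w (j+1))
        = ∑ j ∈ Finset.range (n+1-i),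
            (om M Z W S k t (i+j+1) (w (i+j+1)) - ph Z S t (w (i+j+1))) := by
      rw [Finset.sum_Ico_eq_sum_range]
      refine Finset.sum_congr rfl (fun j _ => ?_)
      have := omEF M Z W S hM k t (i+j) (w (i+j+1))
      rw [show i + j + 1 = (i+j) + 1 by omega] at *
      linarith
    have t2 : ∑ j ∈ Finset.Ico (i+1) (n+1), om M Z W S k t j (s (j-1))
        = ∑ j ∈ Finset.range (n-i),
            (om M Z W S (k+1) (t+1) (i+j) (s (i+j)) + ph Z S t (s (i+j))) := by
      rw [Finset.sum_Ico_eq_sum_range]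
      rw [show n + 1 - (i+1) = n - i by omega]
      refine Finset.sum_congr rfl (fun j _ => ?_)
      rw [show i + 1 + j - 1 = i + j by omega]
      have := omEF M Z W S hM k t (i+j) (s (i+j))
      rw [show i + 1 + j = (i+j) + 1 by omega]
      linarith
    have t3 : ∑ j ∈ Finset.Ico (i+1) (n+2), om M Z W S k t j (w j)
        = ∑ j ∈ Finset.range (n+1-i), om M Z W S k t (i+j+1) (w (i+j+1)) := by
      rw [Finset.sum_Ico_eq_sum_range]
      rw [show n + 2 - (i+1) = n + 1 - i by omega]
      refine Finset.sum_congr rfl (fun j _ => ?_)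
      rw [show i + 1 + j = i + j + 1 by omega]
    have t4 : ∑ j ∈ Finset.Ico i n, om M Z W S (k+1) (t+1) j (s j)
        = ∑ j ∈ Finset.range (n-i), om M Z W S (k+1) (t+1) (i+j) (s (i+j)) := by
      rw [Finset.sum_Ico_eq_sum_range]
    rw [t1, t2, t3, t4]
    have hphp : ∑ j ∈ Finset.range (n-i), ph Z S t (s (i+j))
        ≤ ∑ j ∈ Finset.range (n+1-i), ph Z S t (w (i+j+1)) := by
      have hsplit : ∑ j ∈ Finset.range (n+1-i), ph Z S t (w (i+j+1))
          = (∑ j ∈ Finset.range (n-i), ph Z S t (w (i+(j+1)+1))) + ph Z S t (w (i+0+1)) := by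
        rw [show n + 1 - i = (n-i) + 1 by omega]
        exact Finset.sum_range_succ' _ _
      rw [hsplit]
      have h1 : ∑ j ∈ Finset.range (n-i), ph Z S t (s (i+j))
          ≤ ∑ j ∈ Finset.range (n-i), ph Z S t (w (i+(j+1)+1)) := by
        refine Finset.sum_le_sum (fun j hj => ?_)
        refine ph_anti Z S hZ ?_
        rw [show i + (j+1) + 1 = (i+j) + 2 by omega]
        exact hitail (i+j) (by omega) (by
          have := Finset.mem_range.1 hj
          omega)
      have h2 := ph_nonneg Z S t (w (i+0+1))
      linarith
    rw [Finset.sum_sub_distrib, Finset.sum_add_distrib]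
    linarith
  rw [hwv, hsv]
  linarith

/-- B1 hard direction : `C + D ≤ A + B` or `E + F ≤ A + B`. -/
lemma B1c (hM : 1 ≤ M) (hN : 1 ≤ N)
    (hZ : ∀ r r' : Fin N, r ≤ r' → Z r' ≤ Z r)
    (hWineq : ∀ (m : ℤ) (r0 r1 : Fin N), r0 < r1 →
      0 ≤ W r1 m - W r1 (m + 1) + W r0 (m + 1) - W r0 m + (Z r0 - Z r1) / M)
    (k : ℤ) (t n : ℕ) (hn : n + 1 ≤ N) :
    (Tr M Z W S (k+1) t (n+1) + Tr M Z W S k (t+1) (n+1)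
        ≤ Tr M Z W S (k+1) (t+1) (n+1) + Tr M Z W S k t (n+1)) ∨
    (n + 2 ≤ N ∧ Tr M Z W S k t (n+2) + Tr M Z W S (k+1) (t+1) n
        ≤ Tr M Z W S (k+1) (t+1) (n+1) + Tr M Z W S k t (n+1)) := by
  obtain ⟨u₀, hu₀, hu₀v⟩ := Tr_min M Z W S hN hn (k+1) (t+1)
  obtain ⟨v₀, hv₀, hv₀v⟩ := Tr_min M Z W S hN hn k t
  set u : ℕ → Fin N := fun j => max (u₀ j) (v₀ j) with hudef
  set v : ℕ → Fin N := fun j => min (u₀ j) (v₀ j) with hvdef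
  have hSMu : SMon u (n+1) := fun p q hpq hq => max_lt_max (hu₀ hpq hq) (hv₀ hpq hq)
  have hSMv : SMon v (n+1) := fun p q hpq hq => min_lt_min (hu₀ hpq hq) (hv₀ hpq hq)
  have hAu := Tr_le M Z W S hn (k+1) (t+1) hSMu
  have hBv := Tr_le M Z W S hn k t hSMv
  have hex : wS M Z W S (k+1) (t+1) (n+1) u + wS M Z W S k t (n+1) v
      ≤ Tr M Z W S (k+1) (t+1) (n+1) + Tr M Z W S k t (n+1) := by
    rw [hu₀v, hv₀v]
    unfold wS
    rw [← Finset.sum_add_distrib, ← Finset.sum_add_distrib]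
    refine Finset.sum_le_sum (fun j _ => ?_)
    rw [hudef, hvdef]
    dsimp only
    rcases le_total (v₀ j) (u₀ j) with h | h
    · rw [max_eq_left h, min_eq_right h]
    · rw [max_eq_right h, min_eq_left h]
      have e1 := omAB M Z W S hM k t j (u₀ j)
      have e2 := omAB M Z W S hM k t j (v₀ j)
      have h1 := dd_anti M Z W hM hWineq (m := k + (j:ℤ)) h
      have h2 := hh_anti Z S hZ (t := t) h
      linarith
  have hAeq : wS M Z W S (k+1) (t+1) (n+1) u = Tr M Z W S (k+1) (t+1) (n+1) := by linarith
  have hBeq : wS M Z W S k t (n+1) v = Tr M Z W S k t (n+1) := by linarith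
  have huv : ∀ j, v j ≤ u j := fun j => min_le_max
  have hQvac : ∀ j, n+1 ≤ j → j ≤ n → u j = v j := fun j h1 h2 => absurd h2 (by omega)
  have hQex : ∃ q, ∀ j, q ≤ j → j ≤ n → u j = v j := ⟨n+1, hQvac⟩
  set q₀ := Nat.find hQex with hq₀def
  have hq₀tail := Nat.find_spec hQex
  have hq₀le : q₀ ≤ n + 1 := Nat.find_le hQvac
  by_cases hq0 : q₀ = 0
  · left
    have hCu := Tr_le M Z W S hn (k+1) t hSMu
    have hDv := Tr_le M Z W S hn k (t+1) hSMv
    have hkey : wS M Z W S (k+1) t (n+1) u + wS M Z W S k (t+1) (n+1) v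
        = wS M Z W S (k+1) (t+1) (n+1) u + wS M Z W S k t (n+1) v := by
      unfold wS
      rw [← Finset.sum_add_distrib, ← Finset.sum_add_distrib]
      refine Finset.sum_congr rfl (fun j hj => ?_)
      have huvj : u j = v j := hq₀tail j (by omega) (by
        have := Finset.mem_range.1 hj; omega)
      have e1 := omt (M := M) Z W S (k+1) t j (u j)
      have e2 := omt (M := M) Z W S k t j (v j)
      rw [huvj] at *
      linarith
    linarith
  · set i := q₀ - 1 with hidef
    have hiq : q₀ = i + 1 := by omega
    have hine : u i ≠ v i := by
      have hnot := Nat.find_min hQex (show i < q₀ by omega)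
      push_neg at hnot
      obtain ⟨j, hj1, hj2, hj3⟩ := hnot
      rcases eq_or_lt_of_le hj1 with h | h
      · rw [h]; exact hj3
      · exact absurd (hq₀tail j (by omega) hj2) hj3
    have hvui : v i < u i := (huv i).lt_of_ne (fun h => hine h.symm)
    have hile : i ≤ n := by omega
    rcases ph_or_hh Z S t (u i) with hph | hhh
    · right
      set w' : ℕ → Fin N := fun j => if j < i + 1 then v j else u (j-1) with hwdef
      set s' : ℕ → Fin N := fun j => if j < i then u j else v (j+1) with hsdef
      have hSMw : SMon w' (n+2) := by
        intro p q hpq hq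
        rw [hwdef]
        dsimp only
        by_cases hqi : q < i + 1
        · rw [if_pos (lt_trans hpq hqi), if_pos hqi]
          exact hSMv hpq (by omega)
        · by_cases hpi : p < i + 1
          · rw [if_pos hpi, if_neg hqi]
            have h1 : v p ≤ v i := by
              rcases eq_or_lt_of_le (show p ≤ i by omega) with h | h
              · rw [h]
              · exact le_of_lt (hSMv h (by omega))
            have h2 : u i ≤ u (q-1) := by
              rcases eq_or_lt_of_le (show i ≤ q - 1 by omega) with h | h
              · rw [← h]
              · exact le_of_lt (hSMu h (by omega))
            exact lt_of_le_of_lt h1 (lt_of_lt_of_le hvui h2)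
          · rw [if_neg hpi, if_neg hqi]
            exact hSMu (by omega) (by omega)
      have hSMs : SMon s' n := by
        intro p q hpq hq
        rw [hsdef]
        dsimp only
        by_cases hqi : q < i
        · rw [if_pos (lt_trans hpq hqi), if_pos hqi]
          exact hSMu hpq (by omega)
        · by_cases hpi : p < i
          · rw [if_pos hpi, if_neg hqi]
            have h1 : v (q+1) = u (q+1) := (hq₀tail (q+1) (by omega) (by omega)).symm
            rw [h1]
            exact hSMu (by omega) (by omega)
          · rw [if_neg hpi, if_neg hqi]
            exact hSMv (by omega) (by omega)
      have hn2 : n + 2 ≤ N := smon_card hSMw (by omega)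
      refine ⟨hn2, ?_⟩
      have hTw := Tr_le M Z W S hn2 k t hSMw
      have hTs := Tr_le M Z W S (show n ≤ N by omega) (k+1) (t+1) hSMs
      have key : wS M Z W S k t (n+2) w' + wS M Z W S (k+1) (t+1) n s'
          ≤ wS M Z W S (k+1) (t+1) (n+1) u + wS M Z W S k t (n+1) v := by
        have e1 : wS M Z W S k t (n+2) w'
            = ∑ j ∈ Finset.range (i+1), om M Z W S k t j (v j)
              + ∑ j ∈ Finset.Ico (i+1) (n+2), om M Z W S k t j (u (j-1)) := by
          rw [wS, ← sum_if_split _ _ (show i+1 ≤ n+2 by omega)]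
          exact Finset.sum_congr rfl (fun j _ => by rw [hwdef]; exact apply_ite _ _ _ _)
        have e2 : wS M Z W S (k+1) (t+1) n s'
            = ∑ j ∈ Finset.range i, om M Z W S (k+1) (t+1) j (u j)
              + ∑ j ∈ Finset.Ico i n, om M Z W S (k+1) (t+1) j (v (j+1)) := by
          rw [wS, ← sum_if_split _ _ (show i ≤ n by omega)]
          exact Finset.sum_congr rfl (fun j _ => by rw [hsdef]; exact apply_ite _ _ _ _)
        have e3 : wS M Z W S (k+1) (t+1) (n+1) u
            = ∑ j ∈ Finset.range i, om M Z W S (k+1) (t+1) j (u j)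
              + ∑ j ∈ Finset.Ico i (n+1), om M Z W S (k+1) (t+1) j (u j) := by
          rw [wS, Finset.range_eq_Ico,
            ← Finset.sum_Ico_consecutive _ (Nat.zero_le i) (show i ≤ n+1 by omega),
            ← Finset.range_eq_Ico]
        have e4 : wS M Z W S k t (n+1) v
            = ∑ j ∈ Finset.range (i+1), om M Z W S k t j (v j)
              + ∑ j ∈ Finset.Ico (i+1) (n+1), om M Z W S k t j (v j) := by
          rw [wS, Finset.range_eq_Ico,
            ← Finset.sum_Ico_consecutive _ (Nat.zero_le (i+1)) (show i+1 ≤ n+1 by omega),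
            ← Finset.range_eq_Ico]
        rw [e1, e2, e3, e4]
        have t1 : ∑ j ∈ Finset.Ico (i+1) (n+2), om M Z W S k t j (u (j-1))
            = ∑ j ∈ Finset.range (n+1-i),
                (om M Z W S (k+1) (t+1) (i+j) (u (i+j)) + ph Z S t (u (i+j))) := by
          rw [Finset.sum_Ico_eq_sum_range]
          rw [show n + 2 - (i+1) = n + 1 - i by omega]
          refine Finset.sum_congr rfl (fun j _ => ?_)
          rw [show i + 1 + j - 1 = i + j by omega]
          have := omEF M Z W S hM k t (i+j) (u (i+j))
          rw [show i + 1 + j = (i+j) + 1 by omega]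
          linarith
        have t2 : ∑ j ∈ Finset.Ico i n, om M Z W S (k+1) (t+1) j (v (j+1))
            = ∑ j ∈ Finset.range (n-i), om M Z W S (k+1) (t+1) (i+j) (v (i+j+1)) := by
          rw [Finset.sum_Ico_eq_sum_range]
        have t3 : ∑ j ∈ Finset.Ico i (n+1), om M Z W S (k+1) (t+1) j (u j)
            = ∑ j ∈ Finset.range (n+1-i), om M Z W S (k+1) (t+1) (i+j) (u (i+j)) := by
          rw [Finset.sum_Ico_eq_sum_range]
        have t4 : ∑ j ∈ Finset.Ico (i+1) (n+1), om M Z W S k t j (v j)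
            = ∑ j ∈ Finset.range (n-i),
                (om M Z W S (k+1) (t+1) (i+j) (v (i+j+1)) + ph Z S t (v (i+j+1))) := by
          rw [Finset.sum_Ico_eq_sum_range]
          rw [show n + 1 - (i+1) = n - i by omega]
          refine Finset.sum_congr rfl (fun j _ => ?_)
          have := omEF M Z W S hM k t (i+j) (v (i+j+1))
          rw [show i + 1 + j = (i+j) + 1 by omega, show i + j + 1 = (i+j) + 1 by omega]
          linarith
        rw [t1, t2, t3, t4]
        rw [Finset.sum_add_distrib, Finset.sum_add_distrib]
        have hph2 : ∑ j ∈ Finset.range (n+1-i), ph Z S t (u (i+j))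
            ≤ ∑ j ∈ Finset.range (n-i), ph Z S t (v (i+j+1)) := by
          have hsplit : ∑ j ∈ Finset.range (n+1-i), ph Z S t (u (i+j))
              = (∑ j ∈ Finset.range (n-i), ph Z S t (u (i+(j+1)))) + ph Z S t (u (i+0)) := by
            rw [show n + 1 - i = (n-i) + 1 by omega]
            exact Finset.sum_range_succ' _ _
          rw [hsplit]
          have h1 : ∀ j ∈ Finset.range (n-i), ph Z S t (u (i+(j+1))) = ph Z S t (v (i+j+1)) := by
            intro j hj
            have := Finset.mem_range.1 hj
            rw [show i + (j+1) = i + j + 1 by omega,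
              hq₀tail (i+j+1) (by omega) (by omega)]
          rw [Finset.sum_congr rfl h1]
          have h2 : ph Z S t (u (i+0)) = 0 := by rw [show i + 0 = i by omega]; exact hph
          linarith
        linarith
      linarith
    · left
      have hCu := Tr_le M Z W S hn (k+1) t hSMu
      have hDv := Tr_le M Z W S hn k (t+1) hSMv
      have hSt : S t ≤ Z (u i) := by
        have : min (Z (u i)) (S t) = S t := hhh
        rcases le_total (Z (u i)) (S t) with h | h
        · rw [min_eq_left h] at this; linarith
        · exact h
      have hkey : wS M Z W S (k+1) t (n+1) u + wS M Z W S k (t+1) (n+1) v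
          ≤ wS M Z W S (k+1) (t+1) (n+1) u + wS M Z W S k t (n+1) v := by
        unfold wS
        rw [← Finset.sum_add_distrib, ← Finset.sum_add_distrib]
        refine Finset.sum_le_sum (fun j hj => ?_)
        have hjn : j ≤ n := by have := Finset.mem_range.1 hj; omega
        have e1 := omt (M := M) Z W S (k+1) t j (u j)
        have e2 := omt (M := M) Z W S k t j (v j)
        by_cases hjq : q₀ ≤ j
        · rw [hq₀tail j hjq hjn] at *
          linarith
        · have huj : u j ≤ u i := by
            rcases eq_or_lt_of_le (show j ≤ i by omega) with h | h
            · rw [h]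
            · exact le_of_lt (hSMu h (by omega))
          have hhuj : hh Z S t (u j) = S t := by
            unfold hh
            exact min_eq_right (le_trans hSt (hZ _ _ huj))
          have hhvj := hh_le Z S t (v j)
          linarith
      linarith

/-- B2 easy direction 1 : `LHS ≤ R1 + S t`. -/
lemma B2a (hM : 1 ≤ M) (hN : 1 ≤ N)
    (hZ : ∀ r r' : Fin N, r ≤ r' → Z r' ≤ Z r)
    (hWper : ∀ (r : Fin N) (m : ℤ), W r (m + M) = W r m)
    (hWineq : ∀ (m : ℤ) (r0 r1 : Fin N), r0 < r1 →
      0 ≤ W r1 m - W r1 (m + 1) + W r0 (m + 1) - W r0 m + (Z r0 - Z r1) / M)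
    (k : ℤ) (t n : ℕ) (hn2 : n + 2 ≤ N) :
    Tr M Z W S k (t+1) (n+2) + Tr M Z W S (k+M) t (n+1)
      ≤ Tr M Z W S k t (n+2) + Tr M Z W S (k+M) (t+1) (n+1) + S t := by
  obtain ⟨x, hx, hxv⟩ := Tr_min M Z W S hN hn2 k t
  obtain ⟨y, hy, hyv⟩ := Tr_min M Z W S hN (show n+1 ≤ N by omega) (k+M) (t+1)
  set a : ℕ → Fin N := fun j => if j = 0 then x 0 else max (x j) (y (j-1)) with hadef
  set b : ℕ → Fin N := fun j => min (x (j+1)) (y j) with hbdef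
  have hSMa : SMon a (n+2) := by
    intro p q hpq hq
    rw [hadef]
    dsimp only
    rw [if_neg (show ¬ q = 0 by omega)]
    by_cases hp : p = 0
    · rw [if_pos hp]
      have h1 : x 0 < x q := hx (by omega) hq
      exact lt_of_lt_of_le h1 (le_max_left _ _)
    · rw [if_neg hp]
      exact max_lt_max (hx hpq (by omega)) (hy (by omega) (by omega))
  have hSMb : SMon b (n+1) := by
    intro p q hpq hq
    exact min_lt_min (hx (by omega) (by omega)) (hy hpq (by omega))
  have hTa := Tr_le M Z W S hn2 k (t+1) hSMa
  have hTb := Tr_le M Z W S (show n+1 ≤ N by omega) (k+M) t hSMb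
  have key : wS M Z W S k (t+1) (n+2) a + wS M Z W S (k+M) t (n+1) b
      ≤ wS M Z W S k t (n+2) x + wS M Z W S (k+M) (t+1) (n+1) y + S t := by
    have e1 : wS M Z W S k (t+1) (n+2) a
        = (∑ j ∈ Finset.range (n+1), om M Z W S k (t+1) (j+1) (max (x (j+1)) (y j)))
          + om M Z W S k (t+1) 0 (x 0) := by
      rw [wS, Finset.sum_range_succ']
      have h0 : a (0:ℕ) = x 0 := by simp [hadef]
      have hsum : ∑ j ∈ Finset.range (n+1), om M Z W S k (t+1) (j+1) (a (j+1))
          = ∑ j ∈ Finset.range (n+1), om M Z W S k (t+1) (j+1) (max (x (j+1)) (y j)) := by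
        refine Finset.sum_congr rfl (fun j _ => ?_)
        have hj : a (j+1) = max (x (j+1)) (y j) := by simp [hadef]
        rw [hj]
      rw [hsum, h0]
    have e2 : wS M Z W S k t (n+2) x
        = (∑ j ∈ Finset.range (n+1), om M Z W S k t (j+1) (x (j+1)))
          + om M Z W S k t 0 (x 0) := by
      rw [wS, Finset.sum_range_succ']
    rw [e1, e2, wS, wS]
    have hhead : om M Z W S k (t+1) 0 (x 0) ≤ om M Z W S k t 0 (x 0) + S t := by
      have := omt (M := M) Z W S k t 0 (x 0)
      have := hh_le Z S t (x 0)
      linarith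
    have hpairs : ∑ j ∈ Finset.range (n+1), om M Z W S k (t+1) (j+1) (max (x (j+1)) (y j))
        + ∑ j ∈ Finset.range (n+1), om M Z W S (k+M) t j (b j)
        ≤ ∑ j ∈ Finset.range (n+1), om M Z W S k t (j+1) (x (j+1))
          + ∑ j ∈ Finset.range (n+1), om M Z W S (k+M) (t+1) j (y j) := by
      rw [← Finset.sum_add_distrib, ← Finset.sum_add_distrib]
      refine Finset.sum_le_sum (fun j _ => ?_)
      rw [hbdef]
      dsimp only
      rcases le_total (y j) (x (j+1)) with h | h
      · rw [max_eq_left h, min_eq_right h]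
        have e3 := omt (M := M) Z W S k t (j+1) (x (j+1))
        have e4 := omt (M := M) Z W S (k+M) t j (y j)
        have := hh_anti Z S hZ (t := t) h
        linarith
      · rw [max_eq_right h, min_eq_left h]
        have e3 := omjM Z W S hM hWper k (t+1) j (y j)
        have e4 := omjM Z W S hM hWper k t j (x (j+1))
        have := dd_anti M Z W hM hWineq (m := k + (j:ℤ)) h
        linarith
    linarith
  rw [hxv, hyv]
  linarith

/-- B2 easy direction 2 : `LHS ≤ R2`. -/
lemma B2b (hM : 1 ≤ M) (hN : 1 ≤ N)
    (hZ : ∀ r r' : Fin N, r ≤ r' → Z r' ≤ Z r)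
    (hWper : ∀ (r : Fin N) (m : ℤ), W r (m + M) = W r m)
    (k : ℤ) (t n : ℕ) (hn2 : n + 2 ≤ N) :
    Tr M Z W S k (t+1) (n+2) + Tr M Z W S (k+M) t (n+1)
      ≤ Tr M Z W S (k+M) t (n+2) + Tr M Z W S k (t+1) (n+1) := by
  obtain ⟨x, hx, hxv⟩ := Tr_min M Z W S hN hn2 (k+M) t
  obtain ⟨y, hy, hyv⟩ := Tr_min M Z W S hN (show n+1 ≤ N by omega) k (t+1)
  have hQvac : n+1 ≤ n+1 ∧ ∀ q, n+1 ≤ q → q ≤ n → x q ≤ y q :=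
    ⟨le_rfl, fun q h1 h2 => absurd h2 (by omega)⟩
  have hQex : ∃ i, i ≤ n+1 ∧ ∀ q, i ≤ q → q ≤ n → x q ≤ y q := ⟨n+1, hQvac⟩
  set i := Nat.find hQex with hidef
  obtain ⟨hin, hitail⟩ := Nat.find_spec hQex
  have hjunc : 1 ≤ i → y (i-1) < x (i-1) := by
    intro hi
    have hnot := Nat.find_min hQex (show i - 1 < i by omega)
    by_contra hcon
    push_neg at hcon
    apply hnot
    refine ⟨by omega, fun q h1 h2 => ?_⟩
    rcases eq_or_lt_of_le h1 with h | h1'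
    · rw [← h]; exact hcon
    · exact hitail q (by omega) h2
  set a : ℕ → Fin N := fun j => if j < i then y j else x j with hadef
  set b : ℕ → Fin N := fun j => if j < i then x j else y j with hbdef
  have hSMa : SMon a (n+2) := by
    intro p q hpq hq
    rw [hadef]
    dsimp only
    by_cases hqi : q < i
    · rw [if_pos (lt_trans hpq hqi), if_pos hqi]
      exact hy hpq (by omega)
    · by_cases hpi : p < i
      · rw [if_pos hpi, if_neg hqi]
        have h1 : y p ≤ y (i-1) := by
          rcases eq_or_lt_of_le (show p ≤ i-1 by omega) with h | h
          · rw [h]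
          · exact le_of_lt (hy h (by omega))
        have h2 : x (i-1) ≤ x q := by
          rcases eq_or_lt_of_le (show i-1 ≤ q by omega) with h | h
          · rw [h]
          · exact le_of_lt (hx h (by omega))
        exact lt_of_le_of_lt h1 (lt_of_lt_of_le (hjunc (by omega)) h2)
      · rw [if_neg hpi, if_neg hqi]
        exact hx hpq hq
  have hSMb : SMon b (n+1) := by
    intro p q hpq hq
    rw [hbdef]
    dsimp only
    by_cases hqi : q < i
    · rw [if_pos (lt_trans hpq hqi), if_pos hqi]
      exact hx hpq (by omega)
    · by_cases hpi : p < i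
      · rw [if_pos hpi, if_neg hqi]
        have h1 : x p < x i := hx hpi (by omega)
        have h2 : x i ≤ y i := hitail i le_rfl (by omega)
        have h3 : y i ≤ y q := by
          rcases eq_or_lt_of_le (show i ≤ q by omega) with h | h
          · rw [h]
          · exact le_of_lt (hy h hq)
        exact lt_of_lt_of_le h1 (le_trans h2 h3)
      · rw [if_neg hpi, if_neg hqi]
        exact hy hpq hq
  have hTa := Tr_le M Z W S hn2 k (t+1) hSMa
  have hTb := Tr_le M Z W S (show n+1 ≤ N by omega) (k+M) t hSMb
  have key : wS M Z W S k (t+1) (n+2) a + wS M Z W S (k+M) t (n+1) b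
      ≤ wS M Z W S (k+M) t (n+2) x + wS M Z W S k (t+1) (n+1) y := by
    have e1 : wS M Z W S k (t+1) (n+2) a
        = ∑ j ∈ Finset.range i, om M Z W S k (t+1) j (y j)
          + ∑ j ∈ Finset.Ico i (n+2), om M Z W S k (t+1) j (x j) := by
      rw [wS, ← sum_if_split _ _ (show i ≤ n+2 by omega)]
      exact Finset.sum_congr rfl (fun j _ => by rw [hadef]; exact apply_ite _ _ _ _)
    have e2 : wS M Z W S (k+M) t (n+1) b
        = ∑ j ∈ Finset.range i, om M Z W S (k+M) t j (x j)
          + ∑ j ∈ Finset.Ico i (n+1), om M Z W S (k+M) t j (y j) := by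
      rw [wS, ← sum_if_split _ _ (show i ≤ n+1 by omega)]
      exact Finset.sum_congr rfl (fun j _ => by rw [hbdef]; exact apply_ite _ _ _ _)
    have e3 : wS M Z W S (k+M) t (n+2) x
        = ∑ j ∈ Finset.range i, om M Z W S (k+M) t j (x j)
          + ∑ j ∈ Finset.Ico i (n+2), om M Z W S (k+M) t j (x j) := by
      rw [wS, Finset.range_eq_Ico,
        ← Finset.sum_Ico_consecutive _ (Nat.zero_le i) (show i ≤ n+2 by omega),
        ← Finset.range_eq_Ico]
    have e4 : wS M Z W S k (t+1) (n+1) y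
        = ∑ j ∈ Finset.range i, om M Z W S k (t+1) j (y j)
          + ∑ j ∈ Finset.Ico i (n+1), om M Z W S k (t+1) j (y j) := by
      rw [wS, Finset.range_eq_Ico,
        ← Finset.sum_Ico_consecutive _ (Nat.zero_le i) (show i ≤ n+1 by omega),
        ← Finset.range_eq_Ico]
    rw [e1, e2, e3, e4]
    have t1 : ∑ j ∈ Finset.Ico i (n+2), om M Z W S k (t+1) j (x j)
        = ∑ j ∈ Finset.Ico i (n+2), (om M Z W S (k+M) t j (x j) - ph Z S t (x j)) := by
      refine Finset.sum_congr rfl (fun j _ => ?_)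
      have := omPh M Z W S hM hWper k t j (x j)
      linarith
    have t2 : ∑ j ∈ Finset.Ico i (n+1), om M Z W S (k+M) t j (y j)
        = ∑ j ∈ Finset.Ico i (n+1), (om M Z W S k (t+1) j (y j) + ph Z S t (y j)) := by
      refine Finset.sum_congr rfl (fun j _ => ?_)
      have := omPh M Z W S hM hWper k t j (y j)
      linarith
    rw [t1, t2, Finset.sum_sub_distrib, Finset.sum_add_distrib]
    have hph : ∑ j ∈ Finset.Ico i (n+1), ph Z S t (y j)
        ≤ ∑ j ∈ Finset.Ico i (n+2), ph Z S t (x j) := by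
      rw [Finset.sum_Ico_succ_top (show i ≤ n+1 by omega)]
      have h1 : ∑ j ∈ Finset.Ico i (n+1), ph Z S t (y j)
          ≤ ∑ j ∈ Finset.Ico i (n+1), ph Z S t (x j) := by
        refine Finset.sum_le_sum (fun j hj => ?_)
        obtain ⟨h1, h2⟩ := Finset.mem_Ico.1 hj
        exact ph_anti Z S hZ (hitail j h1 (by omega))
      have h2 := ph_nonneg Z S t (x (n+1))
      linarith
    linarith
  rw [hxv, hyv]
  linarith

lemma pot_ineq (c a b : ℕ) (h : b < a) : c*a + (c+1)*b < c*b + (c+1)*a := by nlinarith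

noncomputable def Phi (n : ℕ) (u v : ℕ → Fin N) : ℕ :=
  (∑ j ∈ Finset.range (n+1), (2*j*(u j : ℕ) + (2*j+1)*(v j : ℕ))) + 2*(n+1)*(u (n+1) : ℕ)

lemma Phi_decomp2 (n : ℕ) (u v : ℕ → Fin N) :
    Phi n u v = ∑ j ∈ Finset.range (n+1), ((2*j+1)*(v j : ℕ) + (2*j+2)*(u (j+1) : ℕ)) := by
  unfold Phi
  rw [Finset.sum_add_distrib, Finset.sum_add_distrib]
  have h1 : (∑ j ∈ Finset.range (n+1), 2*j*(u j:ℕ)) + 2*(n+1)*(u (n+1):ℕ)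
      = ∑ j ∈ Finset.range (n+2), 2*j*(u j:ℕ) := (Finset.sum_range_succ _ _).symm
  have h2 : ∑ j ∈ Finset.range (n+2), 2*j*(u j:ℕ)
      = (∑ j ∈ Finset.range (n+1), 2*(j+1)*(u (j+1):ℕ)) + 2*0*(u 0:ℕ) :=
    Finset.sum_range_succ' _ _
  have h3 : ∑ j ∈ Finset.range (n+1), 2*(j+1)*(u (j+1):ℕ)
      = ∑ j ∈ Finset.range (n+1), (2*j+2)*(u (j+1):ℕ) := by
    refine Finset.sum_congr rfl (fun j _ => ?_)
    ring_nf
  omega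

lemma Phi_le (n : ℕ) (u v : ℕ → Fin N) :
    Phi n u v ≤ (n+1)*((4*n+4)*N) + 2*(n+1)*N := by
  unfold Phi
  have h1 : ∀ j ∈ Finset.range (n+1), 2*j*(u j:ℕ) + (2*j+1)*(v j:ℕ) ≤ (4*n+4)*N := by
    intro j hj
    have hj' := Finset.mem_range.1 hj
    have hu := (u j).isLt
    have hv := (v j).isLt
    have e1 : 2*j*(u j:ℕ) ≤ (2*n+2)*N := Nat.mul_le_mul (by omega) (by omega)
    have e2 : (2*j+1)*(v j:ℕ) ≤ (2*n+2)*N := Nat.mul_le_mul (by omega) (by omega)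
    have e3 : (2*n+2)*N + (2*n+2)*N = (4*n+4)*N := by ring
    omega
  have h2 := Finset.sum_le_card_nsmul (Finset.range (n+1)) _ _ h1
  rw [Finset.card_range, smul_eq_mul] at h2
  have h3 : 2*(n+1)*(u (n+1):ℕ) ≤ 2*(n+1)*N := Nat.mul_le_mul le_rfl (le_of_lt (u (n+1)).isLt)
  omega

lemma B2swap (hM : 1 ≤ M) (hN : 1 ≤ N)
    (hZ : ∀ r r' : Fin N, r ≤ r' → Z r' ≤ Z r)
    (hWper : ∀ (r : Fin N) (m : ℤ), W r (m + M) = W r m)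
    (hWineq : ∀ (m : ℤ) (r0 r1 : Fin N), r0 < r1 →
      0 ≤ W r1 m - W r1 (m + 1) + W r0 (m + 1) - W r0 m + (Z r0 - Z r1) / M)
    (k : ℤ) (t n : ℕ) (hn2 : n + 2 ≤ N) (u v : ℕ → Fin N)
    (hu : SMon u (n+2)) (hv : SMon v (n+1))
    (hwu : wS M Z W S k (t+1) (n+2) u = Tr M Z W S k (t+1) (n+2))
    (hwv : wS M Z W S (k+M) t (n+1) v = Tr M Z W S (k+M) t (n+1))
    (hviol : ¬ ((∀ j, j ≤ n → u j ≤ v j) ∧ (∀ j, j ≤ n → v j ≤ u (j+1)))) :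
    ∃ u' v', SMon u' (n+2) ∧ SMon v' (n+1) ∧
      wS M Z W S k (t+1) (n+2) u' = Tr M Z W S k (t+1) (n+2) ∧
      wS M Z W S (k+M) t (n+1) v' = Tr M Z W S (k+M) t (n+1) ∧
      Phi n u v < Phi n u' v' := by
  by_cases h1 : ∃ j, j ≤ n ∧ v j < u j
  · obtain ⟨j₀, hj₀n, hj₀⟩ := h1
    set u' : ℕ → Fin N := fun j => if j < n+1 then min (u j) (v j) else u j with hu'def
    set v' : ℕ → Fin N := fun j => max (u j) (v j) with hv'def
    have hSMu' : SMon u' (n+2) := by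
      intro p q hpq hq
      rw [hu'def]
      dsimp only
      by_cases hqn : q < n+1
      · rw [if_pos (lt_trans hpq hqn), if_pos hqn]
        exact min_lt_min (hu hpq (by omega)) (hv hpq hqn)
      · rw [if_pos (show p < n+1 by omega), if_neg hqn]
        exact lt_of_le_of_lt (min_le_left _ _) (hu (by omega) (by omega))
    have hSMv' : SMon v' (n+1) := fun p q hpq hq =>
      max_lt_max (hu hpq (by omega)) (hv hpq hq)
    have e1 : wS M Z W S k (t+1) (n+2) u'
        = (∑ j ∈ Finset.range (n+1), om M Z W S k (t+1) j (min (u j) (v j)))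
          + om M Z W S k (t+1) (n+1) (u (n+1)) := by
      rw [wS, Finset.sum_range_succ]
      have htop : u' (n+1) = u (n+1) := by rw [hu'def]; simp
      have hsum : ∑ j ∈ Finset.range (n+1), om M Z W S k (t+1) j (u' j)
          = ∑ j ∈ Finset.range (n+1), om M Z W S k (t+1) j (min (u j) (v j)) := by
        refine Finset.sum_congr rfl (fun j hj => ?_)
        have : u' j = min (u j) (v j) := by
          rw [hu'def]; exact if_pos (Finset.mem_range.1 hj)
        rw [this]
      rw [hsum, htop]
    have e2 : wS M Z W S k (t+1) (n+2) u
        = (∑ j ∈ Finset.range (n+1), om M Z W S k (t+1) j (u j))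
          + om M Z W S k (t+1) (n+1) (u (n+1)) := by
      rw [wS, Finset.sum_range_succ]
    have key : wS M Z W S k (t+1) (n+2) u' + wS M Z W S (k+M) t (n+1) v'
        ≤ wS M Z W S k (t+1) (n+2) u + wS M Z W S (k+M) t (n+1) v := by
      rw [e1, e2, wS, wS]
      have hpairs : ∑ j ∈ Finset.range (n+1), om M Z W S k (t+1) j (min (u j) (v j))
          + ∑ j ∈ Finset.range (n+1), om M Z W S (k+M) t j (v' j)
          ≤ ∑ j ∈ Finset.range (n+1), om M Z W S k (t+1) j (u j)
            + ∑ j ∈ Finset.range (n+1), om M Z W S (k+M) t j (v j) := by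
        rw [← Finset.sum_add_distrib, ← Finset.sum_add_distrib]
        refine Finset.sum_le_sum (fun j _ => ?_)
        rw [hv'def]
        dsimp only
        rcases le_total (u j) (v j) with h | h
        · rw [min_eq_left h, max_eq_right h]
        · rw [min_eq_right h, max_eq_left h]
          have p1 := omPh M Z W S hM hWper k t j (u j)
          have p2 := omPh M Z W S hM hWper k t j (v j)
          have := ph_anti Z S hZ (t := t) h
          linarith
      linarith
    have hTu' := Tr_le M Z W S hn2 k (t+1) hSMu'
    have hTv' := Tr_le M Z W S (show n+1 ≤ N by omega) (k+M) t hSMv'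
    refine ⟨u', v', hSMu', hSMv', by linarith, by linarith, ?_⟩
    unfold Phi
    have htop : u' (n+1) = u (n+1) := by rw [hu'def]; simp
    rw [htop]
    refine Nat.add_lt_add_right ?_ _
    refine Finset.sum_lt_sum (fun j hj => ?_) ⟨j₀, Finset.mem_range.2 (by omega), ?_⟩
    · have hj' := Finset.mem_range.1 hj
      have hu'j : u' j = min (u j) (v j) := by rw [hu'def]; exact if_pos hj'
      have hv'j : v' j = max (u j) (v j) := by rw [hv'def]
      rw [hu'j, hv'j]
      rcases le_total (u j) (v j) with h | h
      · rw [min_eq_left h, max_eq_right h]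
      · rw [min_eq_right h, max_eq_left h]
        rcases eq_or_lt_of_le h with he | hlt
        · rw [he]
        · exact le_of_lt (pot_ineq (2*j) _ _ hlt)
    · have hu'j : u' j₀ = min (u j₀) (v j₀) := by rw [hu'def]; exact if_pos (by omega)
      have hv'j : v' j₀ = max (u j₀) (v j₀) := by rw [hv'def]
      rw [hu'j, hv'j, min_eq_right (le_of_lt hj₀), max_eq_left (le_of_lt hj₀)]
      exact pot_ineq (2*j₀) _ _ hj₀
  · push_neg at h1
    have h2 : ∃ j, j ≤ n ∧ u (j+1) < v j := by
      by_contra hcon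
      push_neg at hcon
      exact hviol ⟨fun j hj => h1 j hj, fun j hj => hcon j hj⟩
    obtain ⟨j₀, hj₀n, hj₀⟩ := h2
    set u' : ℕ → Fin N := fun j => if j = 0 then u 0 else max (u j) (v (j-1)) with hu'def
    set v' : ℕ → Fin N := fun j => min (v j) (u (j+1)) with hv'def
    have hSMu' : SMon u' (n+2) := by
      intro p q hpq hq
      rw [hu'def]
      dsimp only
      rw [if_neg (show ¬ q = 0 by omega)]
      by_cases hp : p = 0
      · rw [if_pos hp]
        have hx : u 0 < u q := hu (by omega) hq
        exact lt_of_lt_of_le hx (le_max_left _ _)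
      · rw [if_neg hp]
        exact max_lt_max (hu hpq hq) (hv (by omega) (by omega))
    have hSMv' : SMon v' (n+1) := fun p q hpq hq =>
      min_lt_min (hv hpq hq) (hu (by omega) (by omega))
    have e1 : wS M Z W S k (t+1) (n+2) u'
        = (∑ j ∈ Finset.range (n+1), om M Z W S k (t+1) (j+1) (max (u (j+1)) (v j)))
          + om M Z W S k (t+1) 0 (u 0) := by
      rw [wS, Finset.sum_range_succ']
      have h0 : u' (0:ℕ) = u 0 := by simp [hu'def]
      have hsum : ∑ j ∈ Finset.range (n+1), om M Z W S k (t+1) (j+1) (u' (j+1))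
          = ∑ j ∈ Finset.range (n+1), om M Z W S k (t+1) (j+1) (max (u (j+1)) (v j)) := by
        refine Finset.sum_congr rfl (fun j _ => ?_)
        have : u' (j+1) = max (u (j+1)) (v j) := by simp [hu'def]
        rw [this]
      rw [hsum, h0]
    have e2 : wS M Z W S k (t+1) (n+2) u
        = (∑ j ∈ Finset.range (n+1), om M Z W S k (t+1) (j+1) (u (j+1)))
          + om M Z W S k (t+1) 0 (u 0) := by
      rw [wS, Finset.sum_range_succ']
    have key : wS M Z W S k (t+1) (n+2) u' + wS M Z W S (k+M) t (n+1) v'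
        ≤ wS M Z W S k (t+1) (n+2) u + wS M Z W S (k+M) t (n+1) v := by
      rw [e1, e2, wS, wS]
      have hpairs : ∑ j ∈ Finset.range (n+1), om M Z W S k (t+1) (j+1) (max (u (j+1)) (v j))
          + ∑ j ∈ Finset.range (n+1), om M Z W S (k+M) t j (v' j)
          ≤ ∑ j ∈ Finset.range (n+1), om M Z W S k (t+1) (j+1) (u (j+1))
            + ∑ j ∈ Finset.range (n+1), om M Z W S (k+M) t j (v j) := by
        rw [← Finset.sum_add_distrib, ← Finset.sum_add_distrib]
        refine Finset.sum_le_sum (fun j _ => ?_)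
        rw [hv'def]
        dsimp only
        rcases le_total (v j) (u (j+1)) with h | h
        · rw [max_eq_left h, min_eq_left h]
        · rw [max_eq_right h, min_eq_right h]
          have p1 := omB2sw M Z W S hM hWper k t j (v j)
          have p2 := omB2sw M Z W S hM hWper k t j (u (j+1))
          have q1 := dd_anti M Z W hM hWineq (m := k + (j:ℤ)) h
          have q2 := hh_anti Z S hZ (t := t) h
          linarith
      linarith
    have hTu' := Tr_le M Z W S hn2 k (t+1) hSMu'
    have hTv' := Tr_le M Z W S (show n+1 ≤ N by omega) (k+M) t hSMv'
    refine ⟨u', v', hSMu', hSMv', by linarith, by linarith, ?_⟩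
    rw [Phi_decomp2, Phi_decomp2]
    refine Finset.sum_lt_sum (fun j hj => ?_) ⟨j₀, Finset.mem_range.2 (by omega), ?_⟩
    · have hv'j : v' j = min (v j) (u (j+1)) := by rw [hv'def]
      have hu'j : u' (j+1) = max (u (j+1)) (v j) := by simp [hu'def]
      rw [hv'j, hu'j]
      rcases le_total (v j) (u (j+1)) with h | h
      · rw [min_eq_left h, max_eq_left h]
      · rw [min_eq_right h, max_eq_right h]
        rcases eq_or_lt_of_le h with he | hlt
        · rw [he]
        · exact le_of_lt (pot_ineq (2*j+1) _ _ hlt)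
    · have hv'j : v' j₀ = min (v j₀) (u (j₀+1)) := by rw [hv'def]
      have hu'j : u' (j₀+1) = max (u (j₀+1)) (v j₀) := by simp [hu'def]
      rw [hv'j, hu'j, min_eq_right (le_of_lt hj₀), max_eq_right (le_of_lt hj₀)]
      exact pot_ineq (2*j₀+1) _ _ hj₀

lemma B2canon (hM : 1 ≤ M) (hN : 1 ≤ N)
    (hZ : ∀ r r' : Fin N, r ≤ r' → Z r' ≤ Z r)
    (hWper : ∀ (r : Fin N) (m : ℤ), W r (m + M) = W r m)
    (hWineq : ∀ (m : ℤ) (r0 r1 : Fin N), r0 < r1 →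
      0 ≤ W r1 m - W r1 (m + 1) + W r0 (m + 1) - W r0 m + (Z r0 - Z r1) / M)
    (k : ℤ) (t n : ℕ) (hn2 : n + 2 ≤ N) :
    ∃ u v : ℕ → Fin N, SMon u (n+2) ∧ SMon v (n+1) ∧
      wS M Z W S k (t+1) (n+2) u = Tr M Z W S k (t+1) (n+2) ∧
      wS M Z W S (k+M) t (n+1) v = Tr M Z W S (k+M) t (n+1) ∧
      (∀ j, j ≤ n → u j ≤ v j) ∧ (∀ j, j ≤ n → v j ≤ u (j+1)) := by
  set B₀ := (n+1)*((4*n+4)*N) + 2*(n+1)*N with hB₀def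
  have haux : ∀ d (u v : ℕ → Fin N), SMon u (n+2) → SMon v (n+1) →
      wS M Z W S k (t+1) (n+2) u = Tr M Z W S k (t+1) (n+2) →
      wS M Z W S (k+M) t (n+1) v = Tr M Z W S (k+M) t (n+1) →
      B₀ ≤ Phi n u v + d →
      ∃ u' v' : ℕ → Fin N, SMon u' (n+2) ∧ SMon v' (n+1) ∧
        wS M Z W S k (t+1) (n+2) u' = Tr M Z W S k (t+1) (n+2) ∧
        wS M Z W S (k+M) t (n+1) v' = Tr M Z W S (k+M) t (n+1) ∧
        (∀ j, j ≤ n → u' j ≤ v' j) ∧ (∀ j, j ≤ n → v' j ≤ u' (j+1)) := by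
    intro d
    induction d with
    | zero =>
      intro u v hu hv hwu hwv hB
      by_cases hok : (∀ j, j ≤ n → u j ≤ v j) ∧ (∀ j, j ≤ n → v j ≤ u (j+1))
      · exact ⟨u, v, hu, hv, hwu, hwv, hok.1, hok.2⟩
      · exfalso
        obtain ⟨u', v', _, _, _, _, hlt⟩ :=
          B2swap M Z W S hM hN hZ hWper hWineq k t n hn2 u v hu hv hwu hwv hok
        have := Phi_le n u' v'
        omega
    | succ d ih =>
      intro u v hu hv hwu hwv hB
      by_cases hok : (∀ j, j ≤ n → u j ≤ v j) ∧ (∀ j, j ≤ n → v j ≤ u (j+1))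
      · exact ⟨u, v, hu, hv, hwu, hwv, hok.1, hok.2⟩
      · obtain ⟨u', v', h1, h2, h3, h4, hlt⟩ :=
          B2swap M Z W S hM hN hZ hWper hWineq k t n hn2 u v hu hv hwu hwv hok
        exact ih u' v' h1 h2 h3 h4 (by omega)
  obtain ⟨u, hu, huv⟩ := Tr_min M Z W S hN hn2 k (t+1)
  obtain ⟨v, hv, hvv⟩ := Tr_min M Z W S hN (show n+1 ≤ N by omega) (k+M) t
  exact haux B₀ u v hu hv huv.symm hvv.symm (by omega)

/-- B2 hard direction : `R1 + S t ≤ LHS` or `R2 ≤ LHS`. -/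
lemma B2c (hM : 1 ≤ M) (hN : 1 ≤ N)
    (hZ : ∀ r r' : Fin N, r ≤ r' → Z r' ≤ Z r)
    (hWper : ∀ (r : Fin N) (m : ℤ), W r (m + M) = W r m)
    (hWineq : ∀ (m : ℤ) (r0 r1 : Fin N), r0 < r1 →
      0 ≤ W r1 m - W r1 (m + 1) + W r0 (m + 1) - W r0 m + (Z r0 - Z r1) / M)
    (k : ℤ) (t n : ℕ) (hn2 : n + 2 ≤ N) :
    (Tr M Z W S k t (n+2) + Tr M Z W S (k+M) (t+1) (n+1) + S t
        ≤ Tr M Z W S k (t+1) (n+2) + Tr M Z W S (k+M) t (n+1)) ∨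
    (Tr M Z W S (k+M) t (n+2) + Tr M Z W S k (t+1) (n+1)
        ≤ Tr M Z W S k (t+1) (n+2) + Tr M Z W S (k+M) t (n+1)) := by
  obtain ⟨u, v, hSMu, hSMv, hwu, hwv, hI1, hI2⟩ :=
    B2canon M Z W S hM hN hZ hWper hWineq k t n hn2
  have hQvac : ∀ j, n+1 ≤ j → j ≤ n → v j = u (j+1) := fun j h1 h2 => absurd h2 (by omega)
  have hQex : ∃ q, ∀ j, q ≤ j → j ≤ n → v j = u (j+1) := ⟨n+1, hQvac⟩
  set q₀ := Nat.find hQex with hq₀def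
  have hq₀tail := Nat.find_spec hQex
  have hq₀le : q₀ ≤ n + 1 := Nat.find_le hQvac
  have hjunc : 1 ≤ q₀ → v (q₀ - 1) < u q₀ := by
    intro hq1
    have hnot := Nat.find_min hQex (show q₀ - 1 < q₀ by omega)
    push_neg at hnot
    obtain ⟨j, hj1, hj2, hj3⟩ := hnot
    have hjq : j = q₀ - 1 := by
      rcases eq_or_lt_of_le hj1 with h | h
      · omega
      · exact absurd (hq₀tail j (by omega) hj2) hj3
    have hne : v (q₀-1) ≠ u q₀ := by
      subst hjq
      rw [show q₀ - 1 + 1 = q₀ from by omega] at hj3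
      exact hj3
    exact lt_of_le_of_ne (by
      have := hI2 (q₀-1) (by omega)
      rw [show q₀ - 1 + 1 = q₀ from by omega] at this
      exact this) hne
  rcases ph_or_hh Z S t (u q₀) with hph | hhh
  · right
    set x : ℕ → Fin N := fun j => if j < q₀ then v j else u j with hxdef
    set y : ℕ → Fin N := fun j => if j < q₀ then u j else v j with hydef
    have hSMx : SMon x (n+2) := by
      intro p q hpq hq
      rw [hxdef]
      dsimp only
      by_cases hqi : q < q₀
      · rw [if_pos (lt_trans hpq hqi), if_pos hqi]
        exact hSMv hpq (by omega)
      · by_cases hpi : p < q₀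
        · rw [if_pos hpi, if_neg hqi]
          have h1 : v p ≤ v (q₀-1) := by
            rcases eq_or_lt_of_le (show p ≤ q₀-1 by omega) with h | h
            · rw [h]
            · exact le_of_lt (hSMv h (by omega))
          have h2 : u q₀ ≤ u q := by
            rcases eq_or_lt_of_le (show q₀ ≤ q by omega) with h | h
            · rw [h]
            · exact le_of_lt (hSMu h hq)
          exact lt_of_le_of_lt h1 (lt_of_lt_of_le (hjunc (by omega)) h2)
        · rw [if_neg hpi, if_neg hqi]
          exact hSMu hpq hq
    have hSMy : SMon y (n+1) := by
      intro p q hpq hq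
      rw [hydef]
      dsimp only
      by_cases hqi : q < q₀
      · rw [if_pos (lt_trans hpq hqi), if_pos hqi]
        exact hSMu hpq (by omega)
      · by_cases hpi : p < q₀
        · rw [if_pos hpi, if_neg hqi]
          exact lt_of_le_of_lt (hI1 p (by omega)) (hSMv hpq hq)
        · rw [if_neg hpi, if_neg hqi]
          exact hSMv hpq hq
    have hTx := Tr_le M Z W S hn2 (k+M) t hSMx
    have hTy := Tr_le M Z W S (show n+1 ≤ N by omega) k (t+1) hSMy
    have key : wS M Z W S (k+M) t (n+2) x + wS M Z W S k (t+1) (n+1) y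
        ≤ wS M Z W S k (t+1) (n+2) u + wS M Z W S (k+M) t (n+1) v := by
      have e1 : wS M Z W S (k+M) t (n+2) x
          = ∑ j ∈ Finset.range q₀, om M Z W S (k+M) t j (v j)
            + ∑ j ∈ Finset.Ico q₀ (n+2), om M Z W S (k+M) t j (u j) := by
        rw [wS, ← sum_if_split _ _ (show q₀ ≤ n+2 by omega)]
        exact Finset.sum_congr rfl (fun j _ => by rw [hxdef]; exact apply_ite _ _ _ _)
      have e2 : wS M Z W S k (t+1) (n+1) y
          = ∑ j ∈ Finset.range q₀, om M Z W S k (t+1) j (u j)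
            + ∑ j ∈ Finset.Ico q₀ (n+1), om M Z W S k (t+1) j (v j) := by
        rw [wS, ← sum_if_split _ _ (show q₀ ≤ n+1 by omega)]
        exact Finset.sum_congr rfl (fun j _ => by rw [hydef]; exact apply_ite _ _ _ _)
      have e3 : wS M Z W S k (t+1) (n+2) u
          = ∑ j ∈ Finset.range q₀, om M Z W S k (t+1) j (u j)
            + ∑ j ∈ Finset.Ico q₀ (n+2), om M Z W S k (t+1) j (u j) := by
        rw [wS, Finset.range_eq_Ico,
          ← Finset.sum_Ico_consecutive _ (Nat.zero_le q₀) (show q₀ ≤ n+2 by omega),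
          ← Finset.range_eq_Ico]
      have e4 : wS M Z W S (k+M) t (n+1) v
          = ∑ j ∈ Finset.range q₀, om M Z W S (k+M) t j (v j)
            + ∑ j ∈ Finset.Ico q₀ (n+1), om M Z W S (k+M) t j (v j) := by
        rw [wS, Finset.range_eq_Ico,
          ← Finset.sum_Ico_consecutive _ (Nat.zero_le q₀) (show q₀ ≤ n+1 by omega),
          ← Finset.range_eq_Ico]
      rw [e1, e2, e3, e4]
      have t1 : ∑ j ∈ Finset.Ico q₀ (n+2), om M Z W S (k+M) t j (u j)
          = ∑ j ∈ Finset.Ico q₀ (n+2), (om M Z W S k (t+1) j (u j) + ph Z S t (u j)) := by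
        refine Finset.sum_congr rfl (fun j _ => ?_)
        exact omPh M Z W S hM hWper k t j (u j)
      have t2 : ∑ j ∈ Finset.Ico q₀ (n+1), om M Z W S k (t+1) j (v j)
          = ∑ j ∈ Finset.Ico q₀ (n+1), (om M Z W S (k+M) t j (v j) - ph Z S t (v j)) := by
        refine Finset.sum_congr rfl (fun j _ => ?_)
        have := omPh M Z W S hM hWper k t j (v j)
        linarith
      rw [t1, t2, Finset.sum_add_distrib, Finset.sum_sub_distrib]
      have hph2 : ∑ j ∈ Finset.Ico q₀ (n+2), ph Z S t (u j)
          ≤ ∑ j ∈ Finset.Ico q₀ (n+1), ph Z S t (v j) := by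
        have r1 : ∑ j ∈ Finset.Ico q₀ (n+1), ph Z S t (v j)
            = ∑ j ∈ Finset.range (n+1-q₀), ph Z S t (u (q₀+j+1)) := by
          rw [Finset.sum_Ico_eq_sum_range]
          refine Finset.sum_congr rfl (fun j hj => ?_)
          have := Finset.mem_range.1 hj
          rw [hq₀tail (q₀+j) (by omega) (by omega)]
        have r2 : ∑ j ∈ Finset.Ico q₀ (n+2), ph Z S t (u j)
            = (∑ j ∈ Finset.range (n+1-q₀), ph Z S t (u (q₀+(j+1)))) + ph Z S t (u (q₀+0)) := by
          rw [Finset.sum_Ico_eq_sum_range, show n+2-q₀ = (n+1-q₀)+1 by omega]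
          exact Finset.sum_range_succ' _ _
        rw [r1, r2]
        have r3 : ∀ j ∈ Finset.range (n+1-q₀), ph Z S t (u (q₀+(j+1))) = ph Z S t (u (q₀+j+1)) := by
          intro j _
          rw [show q₀+(j+1) = q₀+j+1 by omega]
        rw [Finset.sum_congr rfl r3]
        have r4 : ph Z S t (u (q₀+0)) = 0 := by rw [show q₀+0 = q₀ by omega]; exact hph
        rw [r4]
        simp
      linarith
    rw [← hwu, ← hwv]
    linarith
  · left
    have hSt : S t ≤ Z (u q₀) := by
      have h := hhh
      unfold hh at h
      rcases le_total (Z (u q₀)) (S t) with hc | hc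
      · rw [min_eq_left hc] at h; linarith
      · exact hc
    have hTx := Tr_le M Z W S hn2 k t hSMu
    have hTy := Tr_le M Z W S (show n+1 ≤ N by omega) (k+M) (t+1) hSMv
    have key : wS M Z W S k t (n+2) u + wS M Z W S (k+M) (t+1) (n+1) v + S t
        ≤ wS M Z W S k (t+1) (n+2) u + wS M Z W S (k+M) t (n+1) v := by
      have e1 : wS M Z W S k t (n+2) u
          = ∑ j ∈ Finset.range (n+2), (om M Z W S k (t+1) j (u j) - hh Z S t (u j)) := by
        rw [wS]
        refine Finset.sum_congr rfl (fun j _ => ?_)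
        have := omt (M := M) Z W S k t j (u j)
        linarith
      have e2 : wS M Z W S (k+M) (t+1) (n+1) v
          = ∑ j ∈ Finset.range (n+1), (om M Z W S (k+M) t j (v j) + hh Z S t (v j)) := by
        rw [wS]
        refine Finset.sum_congr rfl (fun j _ => ?_)
        exact omt (M := M) Z W S (k+M) t j (v j)
      rw [e1, e2, wS, wS, Finset.sum_sub_distrib, Finset.sum_add_distrib]
      have hkey2 : S t + ∑ j ∈ Finset.range (n+1), hh Z S t (v j)
          ≤ ∑ j ∈ Finset.range (n+2), hh Z S t (u j) := by
        have s1 : ∑ j ∈ Finset.range (n+1), hh Z S t (v j)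
            = ∑ j ∈ Finset.range q₀, hh Z S t (v j)
              + ∑ j ∈ Finset.Ico q₀ (n+1), hh Z S t (v j) := by
          rw [Finset.range_eq_Ico,
            ← Finset.sum_Ico_consecutive _ (Nat.zero_le q₀) (show q₀ ≤ n+1 by omega),
            ← Finset.range_eq_Ico]
        have s2 : ∑ j ∈ Finset.range (n+2), hh Z S t (u j)
            = ∑ j ∈ Finset.range q₀, hh Z S t (u j)
              + ∑ j ∈ Finset.Ico q₀ (n+2), hh Z S t (u j) := by
          rw [Finset.range_eq_Ico,
            ← Finset.sum_Ico_consecutive _ (Nat.zero_le q₀) (show q₀ ≤ n+2 by omega),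
            ← Finset.range_eq_Ico]
        have s3 : ∑ j ∈ Finset.Ico q₀ (n+1), hh Z S t (v j)
            = ∑ j ∈ Finset.range (n+1-q₀), hh Z S t (u (q₀+j+1)) := by
          rw [Finset.sum_Ico_eq_sum_range]
          refine Finset.sum_congr rfl (fun j hj => ?_)
          have := Finset.mem_range.1 hj
          rw [hq₀tail (q₀+j) (by omega) (by omega)]
        have s4 : ∑ j ∈ Finset.Ico q₀ (n+2), hh Z S t (u j)
            = (∑ j ∈ Finset.range (n+1-q₀), hh Z S t (u (q₀+(j+1)))) + hh Z S t (u (q₀+0)) := by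
          rw [Finset.sum_Ico_eq_sum_range, show n+2-q₀ = (n+1-q₀)+1 by omega]
          exact Finset.sum_range_succ' _ _
        have s5 : ∀ j ∈ Finset.range (n+1-q₀), hh Z S t (u (q₀+(j+1))) = hh Z S t (u (q₀+j+1)) := by
          intro j _
          rw [show q₀+(j+1) = q₀+j+1 by omega]
        have s6 : hh Z S t (u (q₀+0)) = S t := by rw [show q₀+0 = q₀ by omega]; exact hhh
        have s7 : ∑ j ∈ Finset.range q₀, hh Z S t (v j) ≤ ∑ j ∈ Finset.range q₀, hh Z S t (u j) := by
          refine Finset.sum_le_sum (fun j hj => ?_)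
          have := Finset.mem_range.1 hj
          exact hh_anti Z S hZ (hI1 j (by omega))
        rw [s1, s2, s3, s4, Finset.sum_congr rfl s5, s6]
        linarith
      linarith
    rw [← hwu, ← hwv]
    linarith

end Core

end NUH

open scoped Classical in
/-- The ultradiscrete tau functions `T^{(k,t)}_n` (minima over strictly increasing tuples,
with value `+∞` for `n > N`) solve the nonautonomous ultradiscrete hungry Toda lattice
with the finite lattice boundary condition (Theorem 5 of the paper). -/
theorem stmt_18
    (M N : ℕ) (hM : 1 ≤ M) (hN : 1 ≤ N)
    (Z : Fin N → ℝ) (hZ : ∀ r r' : Fin N, r ≤ r' → Z r' ≤ Z r)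
    (W : Fin N → ℤ → ℝ) (hWper : ∀ (r : Fin N) (m : ℤ), W r (m + M) = W r m)
    (hWineq : ∀ (m : ℤ) (r0 r1 : Fin N), r0 < r1 →
      0 ≤ W r1 m - W r1 (m + 1) + W r0 (m + 1) - W r0 m + (Z r0 - Z r1) / M)
    (S : ℕ → ℝ)
    (T : ℤ → ℕ → ℕ → EReal)
    (hT0 : ∀ (k : ℤ) (t : ℕ), T k t 0 = 0)
    (hT : ∀ (k : ℤ) (t n : ℕ), T k t (n + 1) =
      (Finset.univ.filter (fun r : Fin (n + 1) → Fin N => StrictMono r)).inf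
        (fun r => ((∑ j : Fin (n + 1),
          (W (r j) (k + (j : ℕ)) +
            ((k + (M + 1) * ((j : ℕ) : ℤ) : ℤ) : ℝ) / (M : ℝ) * Z (r j) +
            ∑ τ ∈ Finset.range t, min (Z (r j)) (S τ)) : ℝ) : EReal)))
    (Q E Et D F : ℤ → ℕ → ℕ → EReal)
    (hQ : ∀ (k : ℤ) (t n : ℕ), n < N → Q k t n
      = T k t n - T k t (n + 1) + T (k + 1) t (n + 1) - T (k + 1) t n)
    (hE : ∀ (k : ℤ) (t n : ℕ), n < N → E k t n
      = T k t (n + 2) - T k t (n + 1) + T (k + M) t n - T (k + M) t (n + 1))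
    (hEt : ∀ (k : ℤ) (t n : ℕ), n < N → Et k t n
      = T k t (n + 2) - T k t (n + 1) + T k (t + 1) n - T k (t + 1) (n + 1))
    (hD : ∀ (k : ℤ) (t n : ℕ), n < N → D k t n
      = T k (t + 1) n - T k t (n + 1) + T (k + 1) t (n + 1) - T (k + 1) (t + 1) n)
    (hF : ∀ (k : ℤ) (t n : ℕ), n < N → F k t n
      = T k t (n + 2) - T k (t + 1) (n + 1) + T (k + M) (t + 1) n - T (k + M) t (n + 1)
        + (S t : EReal)) :
    (∀ (k : ℤ) (t n : ℕ), n < N →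
      Q k (t + 1) n = min (D k t n) (Et k t n)) ∧
    (∀ (k : ℤ) (t n : ℕ), n < N →
      E k (t + 1) n = min (F k t n) (Et (k + M) t n)) ∧
    (∀ (k : ℤ) (t n : ℕ), n + 1 < N →
      D k t (n + 1) = D k t n - Q k (t + 1) n + Q k t (n + 1)) ∧
    (∀ (k : ℤ) (t n : ℕ), n + 1 < N →
      F k t (n + 1) = F k t n - E k (t + 1) n + E k t (n + 1)) ∧
    (∀ (k : ℤ) (t n : ℕ), n + 1 < N →
      Et (k + 1) t n = Et k t n - Q k (t + 1) n + Q k t (n + 1)) ∧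
    (∀ (k : ℤ) (t n : ℕ), n + 1 < N →
      Et k t (n + 1) = Et (k + M) t n - E k (t + 1) n + E k t (n + 1)) ∧
    (∀ (k : ℤ) (t : ℕ), D k t 0 = Q k t 0) ∧
    (∀ (k : ℤ) (t : ℕ), F k t 0 = E k t 0 +
      max 0 ((S t : EReal) - ∑ j ∈ Finset.range M, Q (k + j) t 0)) ∧
    (∀ (k : ℤ) (t : ℕ), Et k t 0 = E k t 0 +
      max 0 ((∑ j ∈ Finset.range M, Q (k + j) t 0) - (S t : EReal))) := by
  have hTcoe : ∀ (k : ℤ) (t n : ℕ), n ≤ N →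
      T k t n = ((NUH.Tr M Z W S k t n : ℝ) : EReal) := by
    intro k t n hn
    cases n with
    | zero =>
      rw [hT0, NUH.Tr_zero]
      simp
    | succ m =>
      rw [hT k t m]
      have hne : (Finset.univ.filter
          (fun r : Fin (m+1) → Fin N => StrictMono r)).Nonempty := NUH.FT_nonempty hn
      have hfun : (fun r : Fin (m+1) → Fin N => ((∑ j : Fin (m + 1),
            (W (r j) (k + (j : ℕ)) +
              ((k + (M + 1) * ((j : ℕ) : ℤ) : ℤ) : ℝ) / (M : ℝ) * Z (r j) +
              ∑ τ ∈ Finset.range t, min (Z (r j)) (S τ)) : ℝ) : EReal))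
          = (fun r : Fin (m+1) → Fin N =>
              (((∑ j : Fin (m+1), NUH.om M Z W S k t (j : ℕ) (r j) : ℝ)) : EReal)) := rfl
      rw [hfun, NUH.inf_coe _ hne (fun r : Fin (m+1) → Fin N =>
        ∑ j : Fin (m+1), NUH.om M Z W S k t (j : ℕ) (r j)), NUH.Tr, dif_pos hne]
  have hTtop : ∀ (k : ℤ) (t n : ℕ), N < n → T k t n = (⊤ : EReal) := by
    intro k t n hn
    cases n with
    | zero => omega
    | succ m =>
      rw [hT k t m]
      have hempty : (Finset.univ.filter
          (fun r : Fin (m+1) → Fin N => StrictMono r)) = ∅ := by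
        rw [Finset.filter_eq_empty_iff]
        intro r _
        intro hSM
        have := Fintype.card_le_of_injective r hSM.injective
        simp only [Fintype.card_fin] at this
        omega
      rw [hempty, Finset.inf_empty]
  have cmin : ∀ a b : ℝ, ((min a b : ℝ) : EReal) = min (a : EReal) (b : EReal) :=
    fun a b => EReal.coe_strictMono.monotone.map_min
  have cmax : ∀ a b : ℝ, ((max a b : ℝ) : EReal) = max (a : EReal) (b : EReal) :=
    fun a b => EReal.coe_strictMono.monotone.map_max
  have hQsum : ∀ (k : ℤ) (t : ℕ) (m : ℕ), ∑ j ∈ Finset.range m, Q (k + (j:ℕ)) t 0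
      = ((NUH.Tr M Z W S (k+(m:ℕ)) t 1 - NUH.Tr M Z W S k t 1 : ℝ) : EReal) := by
    intro k t m
    induction m with
    | zero => simp
    | succ m ih =>
      rw [Finset.sum_range_succ, ih, hQ (k + (m:ℕ)) t 0 (by omega)]
      simp only [hT0]
      rw [hTcoe (k + (m:ℕ)) t 1 hN, hTcoe ((k + (m:ℕ)) + 1) t 1 hN,
        show ((k + (m:ℕ)) + 1 : ℤ) = k + ((m+1 : ℕ) : ℤ) by push_cast; ring]
      norm_cast
      ring
  refine ⟨?_, ?_, ?_, ?_, ?_, ?_, ?_, ?_, ?_⟩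
  · -- (1) Q^{t+1} = min(D, Et)
    intro k t n hnN
    rw [hQ k (t+1) n hnN, hD k t n hnN, hEt k t n hnN]
    by_cases hn2 : n + 2 ≤ N
    · rw [hTcoe k (t+1) n (by omega), hTcoe k (t+1) (n+1) (by omega),
        hTcoe (k+1) (t+1) (n+1) (by omega), hTcoe (k+1) (t+1) n (by omega),
        hTcoe k t (n+1) (by omega), hTcoe (k+1) t (n+1) (by omega),
        hTcoe k t (n+2) (by omega)]
      simp only [← EReal.coe_sub, ← EReal.coe_add]
      rw [← cmin, EReal.coe_eq_coe_iff]
      have hb1a := NUH.B1a M Z W S hM hN hZ hWineq k t n (by omega)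
      have hb1b := NUH.B1b M Z W S hM hN hZ k t n hn2
      have hb1c := NUH.B1c M Z W S hM hN hZ hWineq k t n (by omega)
      have hmin : NUH.Tr M Z W S (k+1) (t+1) (n+1) + NUH.Tr M Z W S k t (n+1)
          = min (NUH.Tr M Z W S (k+1) t (n+1) + NUH.Tr M Z W S k (t+1) (n+1))
                (NUH.Tr M Z W S k t (n+2) + NUH.Tr M Z W S (k+1) (t+1) n) := by
        refine le_antisymm (le_min hb1a hb1b) ?_
        rcases hb1c with h | ⟨_, h⟩
        · exact le_trans (min_le_left _ _) h
        · exact le_trans (min_le_right _ _) h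
      rcases le_total (NUH.Tr M Z W S (k+1) t (n+1) + NUH.Tr M Z W S k (t+1) (n+1))
          (NUH.Tr M Z W S k t (n+2) + NUH.Tr M Z W S (k+1) (t+1) n) with hcase | hcase
      · rw [min_eq_left hcase] at hmin
        rw [min_eq_left (by linarith)]
        linarith
      · rw [min_eq_right hcase] at hmin
        rw [min_eq_right (by linarith)]
        linarith
    · rw [hTtop k t (n+2) (by omega), hTcoe k t (n+1) (by omega),
        hTcoe k (t+1) n (by omega), hTcoe k (t+1) (n+1) (by omega),
        hTcoe (k+1) (t+1) (n+1) (by omega), hTcoe (k+1) (t+1) n (by omega),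
        hTcoe (k+1) t (n+1) (by omega)]
      simp only [EReal.top_sub_coe, EReal.top_add_coe]
      rw [min_eq_left le_top]
      simp only [← EReal.coe_sub, ← EReal.coe_add]
      rw [EReal.coe_eq_coe_iff]
      have hb1a := NUH.B1a M Z W S hM hN hZ hWineq k t n (by omega)
      have hb1c := NUH.B1c M Z W S hM hN hZ hWineq k t n (by omega)
      rcases hb1c with h | ⟨h2, _⟩
      · linarith
      · omega
  · -- (2) E^{t+1} = min(F, Et(k+M))
    intro k t n hnN
    rw [hE k (t+1) n hnN, hF k t n hnN, hEt (k+M) t n hnN]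
    by_cases hn2 : n + 2 ≤ N
    · rw [hTcoe k (t+1) (n+2) (by omega), hTcoe k (t+1) (n+1) (by omega),
        hTcoe (k+M) (t+1) n (by omega), hTcoe (k+M) (t+1) (n+1) (by omega),
        hTcoe k t (n+2) (by omega), hTcoe (k+M) t (n+1) (by omega),
        hTcoe (k+M) t (n+2) (by omega)]
      simp only [← EReal.coe_sub, ← EReal.coe_add]
      rw [← cmin, EReal.coe_eq_coe_iff]
      have hb2a := NUH.B2a M Z W S hM hN hZ hWper hWineq k t n hn2
      have hb2b := NUH.B2b M Z W S hM hN hZ hWper k t n hn2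
      have hb2c := NUH.B2c M Z W S hM hN hZ hWper hWineq k t n hn2
      have hmin : NUH.Tr M Z W S k (t+1) (n+2) + NUH.Tr M Z W S (k+M) t (n+1)
          = min (NUH.Tr M Z W S k t (n+2) + NUH.Tr M Z W S (k+M) (t+1) (n+1) + S t)
                (NUH.Tr M Z W S (k+M) t (n+2) + NUH.Tr M Z W S k (t+1) (n+1)) := by
        refine le_antisymm (le_min hb2a hb2b) ?_
        rcases hb2c with h | h
        · exact le_trans (min_le_left _ _) h
        · exact le_trans (min_le_right _ _) h
      rcases le_total (NUH.Tr M Z W S k t (n+2) + NUH.Tr M Z W S (k+M) (t+1) (n+1) + S t)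
          (NUH.Tr M Z W S (k+M) t (n+2) + NUH.Tr M Z W S k (t+1) (n+1)) with hcase | hcase
      · rw [min_eq_left hcase] at hmin
        rw [min_eq_left (by linarith)]
        linarith
      · rw [min_eq_right hcase] at hmin
        rw [min_eq_right (by linarith)]
        linarith
    · rw [hTtop k (t+1) (n+2) (by omega), hTtop k t (n+2) (by omega),
        hTtop (k+M) t (n+2) (by omega),
        hTcoe k (t+1) (n+1) (by omega), hTcoe (k+M) (t+1) n (by omega),
        hTcoe (k+M) (t+1) (n+1) (by omega), hTcoe (k+M) t (n+1) (by omega)]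
      simp only [EReal.top_sub_coe, EReal.top_add_coe, min_self]
  · -- (3) D recursion
    intro k t n hn
    rw [hD k t (n+1) (by omega), hD k t n (by omega), hQ k (t+1) n (by omega),
      hQ k t (n+1) (by omega),
      hTcoe k (t+1) (n+1) (by omega), hTcoe k t (n+2) (by omega),
      hTcoe (k+1) t (n+2) (by omega), hTcoe (k+1) (t+1) (n+1) (by omega),
      hTcoe k (t+1) n (by omega), hTcoe k t (n+1) (by omega),
      hTcoe (k+1) t (n+1) (by omega), hTcoe (k+1) (t+1) n (by omega)]
    norm_cast
    ring
  · -- (4) F recursion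
    intro k t n hn
    rw [hF k t (n+1) (by omega), hF k t n (by omega), hE k (t+1) n (by omega),
      hE k t (n+1) (by omega)]
    by_cases hn3 : n + 3 ≤ N
    · rw [hTcoe k t (n+3) (by omega), hTcoe k (t+1) (n+2) (by omega),
        hTcoe (k+M) (t+1) (n+1) (by omega), hTcoe (k+M) t (n+2) (by omega),
        hTcoe k t (n+2) (by omega), hTcoe k (t+1) (n+1) (by omega),
        hTcoe (k+M) (t+1) n (by omega), hTcoe (k+M) t (n+1) (by omega)]
      norm_cast
      ring
    · rw [hTtop k t (n+3) (by omega), hTcoe k (t+1) (n+2) (by omega),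
        hTcoe (k+M) (t+1) (n+1) (by omega), hTcoe (k+M) t (n+2) (by omega),
        hTcoe k t (n+2) (by omega), hTcoe k (t+1) (n+1) (by omega),
        hTcoe (k+M) (t+1) n (by omega), hTcoe (k+M) t (n+1) (by omega)]
      simp only [EReal.top_sub_coe, EReal.top_add_coe, ← EReal.coe_sub, ← EReal.coe_add,
        EReal.coe_add_top]
  · -- (5) Et recursion in k
    intro k t n hn
    rw [hEt (k+1) t n (by omega), hEt k t n (by omega), hQ k (t+1) n (by omega),
      hQ k t (n+1) (by omega),
      hTcoe (k+1) t (n+2) (by omega), hTcoe (k+1) t (n+1) (by omega),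
      hTcoe (k+1) (t+1) n (by omega), hTcoe (k+1) (t+1) (n+1) (by omega),
      hTcoe k t (n+2) (by omega), hTcoe k t (n+1) (by omega),
      hTcoe k (t+1) n (by omega), hTcoe k (t+1) (n+1) (by omega)]
    norm_cast
    ring
  · -- (6) Et recursion in n
    intro k t n hn
    rw [hEt k t (n+1) (by omega), hEt (k+M) t n (by omega), hE k (t+1) n (by omega),
      hE k t (n+1) (by omega)]
    by_cases hn3 : n + 3 ≤ N
    · rw [hTcoe k t (n+3) (by omega), hTcoe k t (n+2) (by omega),
        hTcoe k (t+1) (n+1) (by omega), hTcoe k (t+1) (n+2) (by omega),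
        hTcoe (k+M) t (n+2) (by omega), hTcoe (k+M) t (n+1) (by omega),
        hTcoe (k+M) (t+1) n (by omega), hTcoe (k+M) (t+1) (n+1) (by omega)]
      norm_cast
      ring
    · rw [hTtop k t (n+3) (by omega), hTcoe k t (n+2) (by omega),
        hTcoe k (t+1) (n+1) (by omega), hTcoe k (t+1) (n+2) (by omega),
        hTcoe (k+M) t (n+2) (by omega), hTcoe (k+M) t (n+1) (by omega),
        hTcoe (k+M) (t+1) n (by omega), hTcoe (k+M) (t+1) (n+1) (by omega)]
      simp only [EReal.top_sub_coe, EReal.top_add_coe, ← EReal.coe_sub, ← EReal.coe_add,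
        EReal.coe_add_top]
  · -- (7) boundary D₀ = Q₀
    intro k t
    rw [hD k t 0 (by omega), hQ k t 0 (by omega), hT0 k (t+1), hT0 (k+1) (t+1),
      hT0 k t, hT0 (k+1) t]
  · -- (8) boundary F₀
    intro k t
    rw [hF k t 0 (by omega), hE k t 0 (by omega), hT0 (k+M) (t+1), hT0 (k+M) t, hQsum k t M]
    by_cases hN2 : 2 ≤ N
    · rw [hTcoe k t 2 hN2, hTcoe k (t+1) 1 (by omega), hTcoe (k+M) t 1 (by omega),
        hTcoe k t 1 (by omega)]
      simp only [← EReal.coe_zero, ← EReal.coe_sub, ← EReal.coe_add, ← cmax]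
      rw [EReal.coe_eq_coe_iff]
      have hL := NUH.L89 M Z W S hM hN hWper k t
      rcases le_total (NUH.Tr M Z W S k t 1 + S t) (NUH.Tr M Z W S (k+M) t 1) with h | h
      · rw [min_eq_left h] at hL
        rw [max_eq_left (by linarith)]
        linarith
      · rw [min_eq_right h] at hL
        rw [max_eq_right (by linarith)]
        linarith
    · rw [hTtop k t 2 (by omega), hTcoe k (t+1) 1 (by omega), hTcoe (k+M) t 1 (by omega),
        hTcoe k t 1 (by omega)]
      simp only [EReal.top_sub_coe, add_zero, EReal.top_add_coe]
      exact (EReal.top_add_of_ne_bot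
        (ne_of_gt (lt_of_lt_of_le EReal.bot_lt_zero (le_max_left _ _)))).symm
  · -- (9) boundary Et₀
    intro k t
    rw [hEt k t 0 (by omega), hE k t 0 (by omega), hT0 k (t+1), hT0 (k+M) t, hQsum k t M]
    by_cases hN2 : 2 ≤ N
    · rw [hTcoe k t 2 hN2, hTcoe k (t+1) 1 (by omega), hTcoe (k+M) t 1 (by omega),
        hTcoe k t 1 (by omega)]
      simp only [← EReal.coe_zero, ← EReal.coe_sub, ← EReal.coe_add, ← cmax]
      rw [EReal.coe_eq_coe_iff]
      have hL := NUH.L89 M Z W S hM hN hWper k t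
      rcases le_total (NUH.Tr M Z W S k t 1 + S t) (NUH.Tr M Z W S (k+M) t 1) with h | h
      · rw [min_eq_left h] at hL
        rw [max_eq_right (by linarith)]
        linarith
      · rw [min_eq_right h] at hL
        rw [max_eq_left (by linarith)]
        linarith
    · rw [hTtop k t 2 (by omega), hTcoe k (t+1) 1 (by omega), hTcoe (k+M) t 1 (by omega),
        hTcoe k t 1 (by omega)]
      simp only [EReal.top_sub_coe, add_zero, EReal.top_add_coe]
      exact (EReal.top_add_of_ne_bot
        (ne_of_gt (lt_of_lt_of_le EReal.bot_lt_zero (le_max_left _ _)))).symm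
end
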